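/- arXiv:2211.15865 — 4 statements merged into one kernel-verified Lean document; each statement's English description precedes it below -/
import Mathlib

section
/- (van der Corput sublevel-set estimate) Let Q_λ(x) = Σ_{0≤|α|≤d} λ_α x^α be a real polynomial on ℝᵐ, and set ⟦λ⟧ = Σ_{1≤|α|≤d}|λ_α| + |Q_λ(0)|. Then for every ρ > 0, the Lebesgue measure of {x ∈ B₁(ℝᵐ) : |Q_λ(x)| ≤ ρ} is at most C(m,d)·ρ^{1/d}·⟦λ⟧^{-1/d}. -/
open Finset MvPolynomial

lemma vdc_delta (d : ℕ) (t : Fin (d+1) → ℝ) (ht : Function.Injective t) :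
    ∃ L : Matrix (Fin (d+1)) (Fin (d+1)) ℝ,
      ∀ f h : Fin (d+1), ∑ a, L f a * t a ^ (h : ℕ) = if f = h then 1 else 0 := by
  set V := Matrix.vandermonde t with hV
  have hdet : V.det ≠ 0 := by
    rw [Matrix.det_vandermonde]
    refine Finset.prod_ne_zero_iff.2 fun i _ => Finset.prod_ne_zero_iff.2 fun j hj => ?_
    have : i < j := by simpa using hj
    exact sub_ne_zero.2 fun h => (this.ne (ht h.symm))
  refine ⟨V⁻¹, fun f h => ?_⟩
  have h1 := Matrix.nonsing_inv_mul V (isUnit_iff_ne_zero.2 hdet)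
  have h2 : (V⁻¹ * V) f h = (1 : Matrix (Fin (d+1)) (Fin (d+1)) ℝ) f h := by rw [h1]
  rw [Matrix.mul_apply] at h2
  simpa [hV, Matrix.vandermonde_apply, Matrix.one_apply] using h2

section grid
variable (m d : ℕ)

/-- the map from functional indices to finsupp exponents -/
noncomputable def vdc_toα (f : Fin m → Fin (d+1)) : Fin m →₀ ℕ :=
  Finsupp.equivFunOnFinite.symm (fun i => (f i : ℕ))

lemma vdc_toα_apply (f : Fin m → Fin (d+1)) (i : Fin m) : vdc_toα m d f i = (f i : ℕ) := rfl

lemma vdc_toα_inj : Function.Injective (vdc_toα m d) := by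
  intro f g h
  funext i
  have := congrArg (fun α => (α : Fin m →₀ ℕ) i) h
  simpa [vdc_toα_apply, Fin.val_injective.eq_iff] using Fin.val_injective this

lemma vdc_mem_range {P : MvPolynomial (Fin m) ℝ} (hP : P.totalDegree ≤ d)
    {α : Fin m →₀ ℕ} (hα : α ∈ P.support) : ∃ f, vdc_toα m d f = α := by
  have hle : ∀ i, α i ≤ d := by
    intro i
    have h1 : α i ≤ α.sum fun _ e => e := by
      by_cases h : α i = 0
      · simp [h]
      · exact Finset.single_le_sum (f := fun i => α i) (fun _ _ => Nat.zero_le _)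
          (Finsupp.mem_support_iff.2 h)
    exact h1.trans ((MvPolynomial.le_totalDegree hα).trans hP)
  refine ⟨fun i => ⟨α i, Nat.lt_succ_of_le (hle i)⟩, ?_⟩
  ext i
  simp [vdc_toα_apply]

lemma vdc_sum_eq (P : MvPolynomial (Fin m) ℝ) (hP : P.totalDegree ≤ d)
    (G : (Fin m →₀ ℕ) → ℝ) (hG : ∀ α, coeff α P = 0 → G α = 0) :
    ∑ f : Fin m → Fin (d+1), G (vdc_toα m d f) = ∑ α ∈ P.support, G α := by
  rw [← Finset.sum_image (f := G)
    (g := vdc_toα m d) (fun x _ y _ h => vdc_toα_inj m d h)]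
  refine (Finset.sum_subset ?_ ?_).symm
  · intro α hα
    obtain ⟨f, hf⟩ := vdc_mem_range m d hP hα
    exact Finset.mem_image.2 ⟨f, Finset.mem_univ _, hf⟩
  · intro α _ hα
    exact hG α (by simpa [MvPolynomial.mem_support_iff] using hα)

lemma vdc_eval_eq (P : MvPolynomial (Fin m) ℝ) (hP : P.totalDegree ≤ d) (x : Fin m → ℝ) :
    ∑ f : Fin m → Fin (d+1), coeff (vdc_toα m d f) P * ∏ i, x i ^ (f i : ℕ) =
      MvPolynomial.eval x P := by
  rw [MvPolynomial.eval_eq']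
  rw [← vdc_sum_eq m d P hP (fun α => coeff α P * ∏ i, x i ^ (α i))
    (fun α h => by simp [h])]
  exact Finset.sum_congr rfl fun f _ => by simp [vdc_toα_apply]

lemma vdc_abs_sum_eq (P : MvPolynomial (Fin m) ℝ) (hP : P.totalDegree ≤ d) :
    ∑ f : Fin m → Fin (d+1), |coeff (vdc_toα m d f) P| = ∑ α ∈ P.support, |coeff α P| :=
  vdc_sum_eq m d P hP (fun α => |coeff α P|) (fun α h => by simp [h])

end grid

lemma vdc_exists_good_point (m d : ℕ) (hm : 1 ≤ m) (hd : 1 ≤ d) :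
    ∃ c : ℝ, 0 < c ∧ ∀ P : MvPolynomial (Fin m) ℝ, P.totalDegree ≤ d →
      ∃ x : EuclideanSpace ℝ (Fin m), ‖x‖ ≤ 1 ∧
        c * (∑ α ∈ P.support, |MvPolynomial.coeff α P|) ≤
          |MvPolynomial.eval (fun i => x i) P| := by
  classical
  set t : Fin (d+1) → ℝ := fun j => (j : ℝ) / ((d : ℝ) * m) with htdef
  have hdm : (0:ℝ) < (d : ℝ) * m := by positivity
  have ht : Function.Injective t := by
    intro a b h
    have h2 : ((a:ℕ):ℝ) = ((b:ℕ):ℝ) := by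
      have h' : ((a:ℕ):ℝ) / ((d:ℝ)*m) = ((b:ℕ):ℝ) / ((d:ℝ)*m) := h
      exact (div_left_inj' hdm.ne').1 h'
    have hv : (a:ℕ) = (b:ℕ) := Nat.cast_injective h2
    exact Fin.val_injective hv
  obtain ⟨L, hL⟩ := vdc_delta d t ht
  set KL : ℝ := ∑ f : Fin m → Fin (d+1), ∑ g : Fin m → Fin (d+1), ∏ i, |L (f i) (g i)| with hKL
  set D : ℝ := KL + 1 with hD
  have hKL0 : 0 ≤ KL := Finset.sum_nonneg fun _ _ => Finset.sum_nonneg fun _ _ =>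
    Finset.prod_nonneg fun _ _ => abs_nonneg _
  have hD0 : 0 < D := by linarith
  refine ⟨D⁻¹, inv_pos.2 hD0, fun P hP => ?_⟩
  -- grid points
  set pt : (Fin m → Fin (d+1)) → EuclideanSpace ℝ (Fin m) := fun g => WithLp.toLp 2 (fun i => t (g i)) with hpt
  have hptnorm : ∀ g, ‖pt g‖ ≤ 1 := by
    intro g
    rw [EuclideanSpace.norm_eq]
    have key : ∀ i, ‖(pt g) i‖ ^ 2 ≤ 1 / ((m:ℝ) * m) := by
      intro i
      have h1 : |t (g i)| ≤ 1 / (m:ℝ) := by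
        rw [htdef, abs_div, abs_of_nonneg (by positivity : (0:ℝ) ≤ (((g i : ℕ)) : ℝ)),
          abs_of_nonneg hdm.le, div_le_div_iff₀ hdm (by positivity)]
        have hgd : (((g i : ℕ)) : ℝ) ≤ (d:ℝ) := by exact_mod_cast Fin.is_le (g i)
        have hm0 : (0:ℝ) ≤ (m:ℝ) := by positivity
        nlinarith
      have h2 : ‖(pt g) i‖ = |t (g i)| := by simp [hpt, Real.norm_eq_abs]
      rw [h2]
      have h0 : (0:ℝ) ≤ |t (g i)| := abs_nonneg _
      have hmp : (0:ℝ) < (m:ℝ) := by exact_mod_cast hm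
      have : |t (g i)| ^ 2 ≤ (1/(m:ℝ))^2 := by nlinarith
      calc |t (g i)| ^ 2 ≤ (1/(m:ℝ))^2 := this
        _ = 1 / ((m:ℝ)*m) := by ring
    have hsum : (∑ i, ‖(pt g) i‖^2) ≤ (m:ℝ) * (1/((m:ℝ)*m)) := by
      calc (∑ i, ‖(pt g) i‖^2) ≤ ∑ _i : Fin m, 1/((m:ℝ)*m) :=
            Finset.sum_le_sum fun i _ => key i
        _ = (m:ℝ) * (1/((m:ℝ)*m)) := by
            rw [Finset.sum_const, Finset.card_univ, Fintype.card_fin, nsmul_eq_mul]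
    have hmp : (0:ℝ) < (m:ℝ) := by exact_mod_cast hm
    have heq : (m:ℝ) * (1/((m:ℝ)*m)) = 1/(m:ℝ) := by field_simp
    calc Real.sqrt (∑ i, ‖(pt g) i‖^2) ≤ Real.sqrt (1/(m:ℝ)) := by
          apply Real.sqrt_le_sqrt; rw [← heq]; exact hsum
      _ ≤ 1 := by
          rw [show (1:ℝ) = Real.sqrt 1 by simp]
          apply Real.sqrt_le_sqrt
          rw [Real.sqrt_one, div_le_one hmp]
          exact_mod_cast hm
  -- coefficient recovery
  set w : (Fin m → Fin (d+1)) → ℝ := fun f => coeff (vdc_toα m d f) P with hw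
  have recovery : ∀ f, w f = ∑ g : Fin m → Fin (d+1),
      (∏ i, L (f i) (g i)) * MvPolynomial.eval (fun i => (pt g) i) P := by
    intro f
    have : ∀ g : Fin m → Fin (d+1), MvPolynomial.eval (fun i => (pt g) i) P
        = ∑ h : Fin m → Fin (d+1), w h * ∏ i, t (g i) ^ (h i : ℕ) :=
      fun g => (vdc_eval_eq m d P hP (fun i => t (g i))).symm
    simp_rw [this, Finset.mul_sum]
    rw [Finset.sum_comm]
    have key : ∀ h : Fin m → Fin (d+1),
        ∑ g : Fin m → Fin (d+1), (∏ i, L (f i) (g i)) * (w h * ∏ i, t (g i) ^ (h i : ℕ))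
        = w h * (if f = h then 1 else 0) := by
      intro h
      have : ∀ g : Fin m → Fin (d+1), (∏ i, L (f i) (g i)) * (w h * ∏ i, t (g i) ^ (h i : ℕ))
          = w h * ∏ i, (L (f i) (g i) * t (g i) ^ (h i : ℕ)) := by
        intro g; rw [Finset.prod_mul_distrib]; ring
      simp_rw [this, ← Finset.mul_sum]
      congr 1
      rw [← Fintype.prod_sum (fun i a => L (f i) a * t a ^ (h i : ℕ))]
      by_cases hfh : f = h
      · subst hfh
        simp only [if_pos rfl]
        apply Finset.prod_eq_one
        intro i _
        rw [hL (f i) (f i)]; simp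
      · rw [if_neg hfh]
        obtain ⟨i, hi⟩ : ∃ i, f i ≠ h i := by
          by_contra hc
          push_neg at hc
          exact hfh (funext hc)
        apply Finset.prod_eq_zero (Finset.mem_univ i)
        rw [hL (f i) (h i), if_neg hi]
    simp_rw [key]
    simp
  -- choose max point
  obtain ⟨g₀, -, hg₀⟩ := Finset.exists_max_image (Finset.univ : Finset (Fin m → Fin (d+1)))
    (fun g => |MvPolynomial.eval (fun i => (pt g) i) P|) ⟨fun _ => 0, Finset.mem_univ _⟩
  set Mx := |MvPolynomial.eval (fun i => (pt g₀) i) P| with hMx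
  have hMx0 : 0 ≤ Mx := abs_nonneg _
  have hbound : ∑ α ∈ P.support, |coeff α P| ≤ D * Mx := by
    rw [← vdc_abs_sum_eq m d P hP]
    have h1 : ∀ f, |w f| ≤ (∑ g : Fin m → Fin (d+1), ∏ i, |L (f i) (g i)|) * Mx := by
      intro f
      rw [recovery f]
      calc |∑ g : Fin m → Fin (d+1), (∏ i, L (f i) (g i)) * MvPolynomial.eval (fun i => (pt g) i) P|
          ≤ ∑ g : Fin m → Fin (d+1), |(∏ i, L (f i) (g i)) * MvPolynomial.eval (fun i => (pt g) i) P| :=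
            Finset.abs_sum_le_sum_abs _ _
        _ ≤ ∑ g : Fin m → Fin (d+1), (∏ i, |L (f i) (g i)|) * Mx := by
            refine Finset.sum_le_sum fun g _ => ?_
            rw [abs_mul, abs_prod]
            exact mul_le_mul_of_nonneg_left (hg₀ g (Finset.mem_univ g))
              (Finset.prod_nonneg fun _ _ => abs_nonneg _)
        _ = (∑ g : Fin m → Fin (d+1), ∏ i, |L (f i) (g i)|) * Mx := by rw [Finset.sum_mul]
    calc ∑ f : Fin m → Fin (d+1), |w f| ≤
        ∑ f : Fin m → Fin (d+1), (∑ g : Fin m → Fin (d+1), ∏ i, |L (f i) (g i)|) * Mx :=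
          Finset.sum_le_sum fun f _ => h1 f
      _ = KL * Mx := by rw [← Finset.sum_mul]
      _ ≤ D * Mx := mul_le_mul_of_nonneg_right (by linarith) hMx0
  refine ⟨pt g₀, hptnorm g₀, ?_⟩
  rw [inv_mul_le_iff₀ hD0]
  exact hbound

open MeasureTheory Set

lemma vdc_nodes (n : ℕ) (A : Set ℝ) (hA : IsClosed A) (hsub : A ⊆ Set.Icc (-3) 3)
    (s : ℝ) (hs : 0 < s) (hvol : ENNReal.ofReal s ≤ volume A) :
    ∃ x : Fin (n+1) → ℝ, (∀ j, x j ∈ A) ∧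
      ∀ j k : Fin (n+1), j < k → s / (n+1) ≤ x k - x j := by
  have hAm : MeasurableSet A := hA.measurableSet
  have hfin : ∀ B : Set ℝ, B ⊆ A → volume B ≠ ⊤ := by
    intro B hB
    refine ne_top_of_le_ne_top ?_ (measure_mono (hB.trans hsub))
    simp [Real.volume_Icc]
  set F : ℝ → ℝ := fun t => (volume (A ∩ Set.Iic t)).toReal with hF
  have hfin' : ∀ t, volume (A ∩ Set.Iic t) ≠ ⊤ := fun t => hfin _ inter_subset_left
  have hmono : Monotone F := by
    intro u t hut
    exact ENNReal.toReal_mono (hfin' t)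
      (measure_mono (inter_subset_inter_right _ (Iic_subset_Iic.2 hut)))
  have hlip : ∀ u t : ℝ, u ≤ t → F t ≤ F u + (t - u) := by
    intro u t hut
    have hsubs : A ∩ Set.Iic t ⊆ (A ∩ Set.Iic u) ∪ Set.Ioc u t := by
      rintro z ⟨hz1, hz2⟩
      rcases le_or_gt z u with h | h
      · exact Or.inl ⟨hz1, h⟩
      · exact Or.inr ⟨h, hz2⟩
    have h1 : volume (A ∩ Set.Iic t) ≤ volume (A ∩ Set.Iic u) + ENNReal.ofReal (t - u) := by
      calc volume (A ∩ Set.Iic t) ≤ volume ((A ∩ Set.Iic u) ∪ Set.Ioc u t) := measure_mono hsubs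
        _ ≤ volume (A ∩ Set.Iic u) + volume (Set.Ioc u t) := measure_union_le _ _
        _ = volume (A ∩ Set.Iic u) + ENNReal.ofReal (t - u) := by rw [Real.volume_Ioc]
    calc F t ≤ ((volume (A ∩ Set.Iic u)) + ENNReal.ofReal (t - u)).toReal := by
          apply ENNReal.toReal_mono _ h1
          exact ENNReal.add_ne_top.2 ⟨hfin' u, ENNReal.ofReal_ne_top⟩
      _ = F u + (t - u) := by
          rw [ENNReal.toReal_add (hfin' u) ENNReal.ofReal_ne_top,
            ENNReal.toReal_ofReal (by linarith)]
  have hcont : Continuous F := by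
    have : LipschitzWith 1 F := by
      apply LipschitzWith.of_dist_le_mul
      intro u t
      rw [Real.dist_eq, Real.dist_eq, NNReal.coe_one, one_mul]
      rcases le_total u t with h | h
      · rw [abs_of_nonpos (by linarith [hmono h] : F u - F t ≤ 0), abs_of_nonpos (by linarith)]
        have := hlip u t h
        linarith
      · rw [abs_of_nonneg (by linarith [hmono h] : 0 ≤ F u - F t), abs_of_nonneg (by linarith)]
        have := hlip t u h
        linarith
    exact this.continuous
  have hF3 : s ≤ F 3 := by
    have hA3 : A ∩ Set.Iic 3 = A := by
      apply Set.inter_eq_left.2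
      intro a ha
      exact (hsub ha).2
    rw [hF]
    simp only [hA3]
    calc s = (ENNReal.ofReal s).toReal := by rw [ENNReal.toReal_ofReal hs.le]
      _ ≤ (volume A).toReal := ENNReal.toReal_mono (hfin _ subset_rfl) hvol
  -- targets
  set q : ℝ := s / (n+1) with hq
  have hq0 : 0 < q := by positivity
  set c : Fin (n+1) → ℝ := fun j => ((j : ℝ) + 2⁻¹) * q with hc
  have hc0 : ∀ j, 0 < c j := by
    intro j
    have : (0:ℝ) ≤ (j:ℝ) := by positivity
    rw [hc]; positivity
  have hclt : ∀ j, c j < s := by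
    intro j
    have hj : (j : ℝ) ≤ n := by exact_mod_cast Fin.is_le j
    have : ((j:ℝ) + 2⁻¹) < (n+1 : ℝ) := by linarith
    have hsq : s = ((n:ℝ)+1) * q := by
      rw [hq]; field_simp
    rw [hc, hsq]
    have := mul_lt_mul_of_pos_right this hq0
    linarith
  set S : Fin (n+1) → Set ℝ := fun j => {t | c j ≤ F t} with hS
  have hSclosed : ∀ j, IsClosed (S j) := fun j => isClosed_le continuous_const hcont
  have hSne : ∀ j, (3:ℝ) ∈ S j := fun j => le_trans (hclt j).le hF3
  have hSbdd : ∀ j, BddBelow (S j) := by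
    intro j
    refine ⟨-3, fun t ht => ?_⟩
    by_contra hlt
    push_neg at hlt
    have : A ∩ Set.Iic t = ∅ := by
      ext a
      simp only [Set.mem_inter_iff, Set.mem_Iic, Set.mem_empty_iff_false, iff_false]
      rintro ⟨ha, hat⟩
      linarith [(hsub ha).1]
    have : F t = 0 := by rw [hF]; simp only [this]; simp
    have := hc0 j
    have hmem : c j ≤ F t := ht
    linarith
  set x : Fin (n+1) → ℝ := fun j => sInf (S j) with hx
  have hxS : ∀ j, x j ∈ S j := fun j => (hSclosed j).csInf_mem ⟨3, hSne j⟩ (hSbdd j)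
  have hFxge : ∀ j, c j ≤ F (x j) := fun j => hxS j
  have hFxle : ∀ j, F (x j) ≤ c j := by
    intro j
    by_contra h
    push_neg at h
    obtain ⟨δ, hδ0, hδ⟩ := Metric.continuousAt_iff.1 hcont.continuousAt (F (x j) - c j)
      (by linarith)
    have h1 : dist (x j - δ/2) (x j) < δ := by
      rw [Real.dist_eq]
      rw [abs_of_nonpos (by linarith)]
      linarith
    have h2 := hδ h1
    rw [Real.dist_eq, abs_lt] at h2
    have : x j - δ/2 ∈ S j := by
      simp only [hS, mem_setOf_eq]
      linarith [h2.1]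
    have h3 : x j ≤ x j - δ/2 := csInf_le (hSbdd j) this
    linarith
  have hxA : ∀ j, x j ∈ A := by
    intro j
    by_contra hxa
    obtain ⟨ε, hε0, hball⟩ := Metric.isOpen_iff.1 hA.isOpen_compl (x j) hxa
    have hsubs : A ∩ Set.Iic (x j) ⊆ (A ∩ Set.Iic (x j - ε/2)) ∪ (A ∩ Set.Ioc (x j - ε/2) (x j)) := by
      rintro z ⟨hz1, hz2⟩
      rcases le_or_gt z (x j - ε/2) with h | h
      · exact Or.inl ⟨hz1, h⟩
      · exact Or.inr ⟨hz1, h, hz2⟩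
    have hzero : A ∩ Set.Ioc (x j - ε/2) (x j) = ∅ := by
      ext z
      simp only [Set.mem_inter_iff, Set.mem_Ioc, Set.mem_empty_iff_false, iff_false]
      rintro ⟨hz, hz1, hz2⟩
      have : z ∈ Metric.ball (x j) ε := by
        rw [Metric.mem_ball, Real.dist_eq, abs_lt]
        constructor <;> linarith
      exact hball this hz
    have hle : F (x j) ≤ F (x j - ε/2) := by
      have : volume (A ∩ Set.Iic (x j)) ≤ volume (A ∩ Set.Iic (x j - ε/2)) := by
        calc volume (A ∩ Set.Iic (x j)) ≤
            volume ((A ∩ Set.Iic (x j - ε/2)) ∪ (A ∩ Set.Ioc (x j - ε/2) (x j))) :=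
              measure_mono hsubs
          _ ≤ volume (A ∩ Set.Iic (x j - ε/2)) + volume (A ∩ Set.Ioc (x j - ε/2) (x j)) :=
              measure_union_le _ _
          _ = volume (A ∩ Set.Iic (x j - ε/2)) := by rw [hzero]; simp
      exact ENNReal.toReal_mono (hfin' _) this
    have : x j - ε/2 ∈ S j := by
      simp only [hS, mem_setOf_eq]
      linarith [hFxge j]
    have h3 : x j ≤ x j - ε/2 := csInf_le (hSbdd j) this
    linarith
  refine ⟨x, hxA, ?_⟩
  intro j k hjk
  have hcjk : c k - c j = ((k:ℝ) - (j:ℝ)) * q := by rw [hc]; ring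
  have hk1 : (j:ℝ) + 1 ≤ (k:ℝ) := by exact_mod_cast hjk
  have hgap : q ≤ c k - c j := by
    rw [hcjk]
    nlinarith
  have hxjk : x j ≤ x k := by
    by_contra h
    push_neg at h
    have := hmono h.le
    have h1 := hFxge k
    have h2 := hFxle j
    linarith
  have := hlip (x j) (x k) hxjk
  have h1 := hFxge k
  have h2 := hFxle j
  rw [hq] at *
  linarith

open Polynomial Finset

lemma vdc_lagrange (n : ℕ) (p : Polynomial ℝ) (hdeg : p.natDegree ≤ n)
    (x : Fin (n+1) → ℝ) (hx3 : ∀ j, |x j| ≤ 3) (q : ℝ) (hq : 0 < q)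
    (hsep : ∀ j k, j ≠ k → q ≤ |x j - x k|) (ρ : ℝ)
    (hval : ∀ j, |p.eval (x j)| ≤ ρ) :
    |p.eval 0| ≤ (n+1) * (3/q)^n * ρ := by
  have hρ0 : 0 ≤ ρ := le_trans (abs_nonneg _) (hval 0)
  have hinj : Function.Injective x := by
    intro a b hab
    by_contra h
    have := hsep a b h
    rw [hab, sub_self, abs_zero] at this
    linarith
  have hdlt : p.degree < ((Finset.univ : Finset (Fin (n+1))).card : WithBot ℕ) := by
    rw [Finset.card_univ, Fintype.card_fin]
    calc p.degree ≤ (p.natDegree : WithBot ℕ) := Polynomial.degree_le_natDegree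
      _ < ((n+1 : ℕ) : WithBot ℕ) := by
          exact_mod_cast Nat.lt_succ_of_le hdeg
  have heq := Lagrange.eq_interpolate (s := Finset.univ) (v := x) hinj.injOn hdlt
  have hbasis : ∀ i : Fin (n+1), |Polynomial.eval 0 (Lagrange.basis Finset.univ x i)| ≤ (3/q)^n := by
    intro i
    rw [Lagrange.basis, Polynomial.eval_prod, abs_prod]
    have hcard : (Finset.univ.erase i).card = n := by
      rw [Finset.card_erase_of_mem (Finset.mem_univ i), Finset.card_univ, Fintype.card_fin]
      omega
    calc ∏ j ∈ Finset.univ.erase i, |Polynomial.eval 0 (Lagrange.basisDivisor (x i) (x j))|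
        ≤ ∏ _j ∈ Finset.univ.erase i, (3/q) := by
          refine Finset.prod_le_prod (fun j _ => abs_nonneg _) (fun j hj => ?_)
          have hji : i ≠ j := fun h => (Finset.mem_erase.1 hj).1 h.symm
          rw [Lagrange.basisDivisor]
          rw [Polynomial.eval_mul, Polynomial.eval_C, Polynomial.eval_sub, Polynomial.eval_X,
            Polynomial.eval_C, abs_mul, abs_inv]
          rw [zero_sub, abs_neg]
          have h1 : q ≤ |x i - x j| := hsep i j hji
          have h2 : |x j| ≤ 3 := hx3 j
          rw [div_eq_mul_inv]
          have hinv : |x i - x j|⁻¹ ≤ q⁻¹ := by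
            rw [inv_le_inv₀ (by linarith) hq]; exact h1
          calc |x i - x j|⁻¹ * |x j| ≤ q⁻¹ * 3 :=
              mul_le_mul hinv h2 (abs_nonneg _) (by positivity)
            _ = 3 * q⁻¹ := by ring
      _ = (3/q)^n := by rw [Finset.prod_const, hcard]
  conv_lhs => rw [heq]
  rw [Lagrange.interpolate_apply, Polynomial.eval_finset_sum]
  calc |∑ i : Fin (n+1), Polynomial.eval 0 (Polynomial.C (p.eval (x i)) * Lagrange.basis Finset.univ x i)|
      ≤ ∑ i : Fin (n+1), |Polynomial.eval 0 (Polynomial.C (p.eval (x i)) * Lagrange.basis Finset.univ x i)| :=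
        Finset.abs_sum_le_sum_abs _ _
    _ ≤ ∑ _i : Fin (n+1), ρ * (3/q)^n := by
        refine Finset.sum_le_sum fun i _ => ?_
        rw [Polynomial.eval_mul, Polynomial.eval_C, abs_mul]
        exact mul_le_mul (hval i) (hbasis i) (abs_nonneg _) hρ0
    _ = (n+1) * (3/q)^n * ρ := by
        rw [Finset.sum_const, Finset.card_univ, Fintype.card_fin, nsmul_eq_mul]
        push_cast
        ring

open MeasureTheory in
lemma vdc_oneD (d : ℕ) (hd : 1 ≤ d) (p : Polynomial ℝ) (hdeg : p.natDegree ≤ d)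
    (ρ M : ℝ) (hρ : 0 < ρ) (hM : 0 < M) (hp0 : M ≤ |p.eval 0|)
    (hA : IsClosed ({t : ℝ | |p.eval t| ≤ ρ}))  -- dummy? no, provable; keep as argument-free
    : volume (Set.Icc (-3:ℝ) 3 ∩ {t : ℝ | |p.eval t| ≤ ρ}) ≤
      ENNReal.ofReal (((d:ℝ)+1) * ((((d:ℝ)+1) * 3^d * ρ) / M) ^ ((d:ℝ)⁻¹)) := by
  set A := Set.Icc (-3:ℝ) 3 ∩ {t : ℝ | |p.eval t| ≤ ρ} with hAdef
  have hAclosed : IsClosed A := isClosed_Icc.inter hA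
  have hsub : A ⊆ Set.Icc (-3:ℝ) 3 := Set.inter_subset_left
  have hfin : volume A ≠ ⊤ := by
    refine ne_top_of_le_ne_top ?_ (measure_mono hsub)
    simp [Real.volume_Icc]
  rcases eq_or_ne (volume A) 0 with h0 | h0
  · rw [h0]; exact bot_le
  set s := (volume A).toReal with hs
  have hs0 : 0 < s := ENNReal.toReal_pos h0 hfin
  obtain ⟨x, hxA, hgap⟩ := vdc_nodes d A hAclosed hsub s hs0
    (by rw [hs, ENNReal.ofReal_toReal hfin])
  set q : ℝ := s / (d+1) with hq
  have hq0 : 0 < q := by positivity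
  have hsep : ∀ j k : Fin (d+1), j ≠ k → q ≤ |x j - x k| := by
    intro j k hjk
    rcases lt_or_gt_of_ne hjk with h | h
    · rw [abs_of_nonpos (by linarith [hgap j k h])]
      linarith [hgap j k h]
    · rw [abs_of_nonneg (by linarith [hgap k j h])]
      linarith [hgap k j h]
  have hx3 : ∀ j, |x j| ≤ 3 := by
    intro j
    have := hsub (hxA j)
    rw [abs_le]
    exact ⟨this.1, this.2⟩
  have hval : ∀ j, |p.eval (x j)| ≤ ρ := fun j => (hxA j).2
  have hlag := vdc_lagrange d p hdeg x hx3 q hq0 hsep ρ hval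
  have hMle : M ≤ ((d:ℝ)+1) * (3/q)^d * ρ := by
    calc M ≤ |p.eval 0| := hp0
      _ ≤ ((d:ℝ)+1) * (3/q)^d * ρ := by exact_mod_cast hlag
  have hqd : q ^ d ≤ ((d:ℝ)+1) * 3^d * ρ / M := by
    rw [le_div_iff₀ hM]
    have h1 : (3/q)^d = 3^d / q^d := div_pow 3 q d
    rw [h1] at hMle
    have h2 := mul_le_mul_of_nonneg_right hMle (le_of_lt (pow_pos hq0 d))
    calc q^d * M = M * q^d := by ring
      _ ≤ ((d:ℝ)+1) * (3^d / q^d) * ρ * q^d := h2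
      _ = ((d:ℝ)+1) * 3^d * ρ := by
          field_simp
  set R := ((d:ℝ)+1) * 3^d * ρ / M with hR
  have hR0 : 0 < R := by positivity
  have hqR : q ≤ R ^ ((d:ℝ)⁻¹) := by
    have h1 : q = (q ^ d) ^ ((d:ℝ)⁻¹) := by
      rw [← Real.rpow_natCast q d, ← Real.rpow_mul hq0.le]
      have hdne : (d:ℝ) ≠ 0 := by
        have : d ≠ 0 := by omega
        exact_mod_cast this
      rw [mul_inv_cancel₀ hdne]
      rw [Real.rpow_one]
    rw [h1]
    exact Real.rpow_le_rpow (pow_nonneg hq0.le d) hqd (by positivity)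
  have hsle : s ≤ ((d:ℝ)+1) * R ^ ((d:ℝ)⁻¹) := by
    have : s = ((d:ℝ)+1) * q := by rw [hq]; field_simp
    rw [this]
    exact mul_le_mul_of_nonneg_left hqR (by positivity)
  calc volume A = ENNReal.ofReal s := by rw [hs, ENNReal.ofReal_toReal hfin]
    _ ≤ ENNReal.ofReal (((d:ℝ)+1) * R ^ ((d:ℝ)⁻¹)) := ENNReal.ofReal_le_ofReal hsle

open Polynomial

noncomputable def vdcLine {m : ℕ} (P : MvPolynomial (Fin m) ℝ) (x₀ ω : Fin m → ℝ) :
    Polynomial ℝ :=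
  MvPolynomial.aeval (fun i => Polynomial.C (x₀ i) + Polynomial.C (ω i) * Polynomial.X) P

lemma vdcLine_eval {m : ℕ} (P : MvPolynomial (Fin m) ℝ) (x₀ ω : Fin m → ℝ) (t : ℝ) :
    (vdcLine P x₀ ω).eval t = MvPolynomial.eval (fun i => x₀ i + ω i * t) P := by
  have h := MvPolynomial.eval₂_comp_left (Polynomial.evalRingHom t) Polynomial.C
      (fun i => Polynomial.C (x₀ i) + Polynomial.C (ω i) * Polynomial.X) P
  rw [vdcLine, MvPolynomial.aeval_def, Polynomial.algebraMap_eq]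
  show (Polynomial.evalRingHom t) _ = _
  rw [h]
  have h2 : (Polynomial.evalRingHom t).comp Polynomial.C = RingHom.id ℝ :=
    RingHom.ext fun a => by simp
  have h3 : ((Polynomial.evalRingHom t) ∘
      fun i => Polynomial.C (x₀ i) + Polynomial.C (ω i) * Polynomial.X) =
      fun i => x₀ i + ω i * t := by
    funext i; simp
  rw [h2, h3]
  rfl

lemma vdcLine_natDegree {m d : ℕ} (P : MvPolynomial (Fin m) ℝ) (hP : P.totalDegree ≤ d)
    (x₀ ω : Fin m → ℝ) : (vdcLine P x₀ ω).natDegree ≤ d := by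
  rw [vdcLine]
  rw [P.as_sum]
  rw [map_sum]
  apply Polynomial.natDegree_sum_le_of_forall_le
  intro α hα
  rw [MvPolynomial.aeval_monomial]
  calc (algebraMap ℝ (Polynomial ℝ) (MvPolynomial.coeff α P) *
        α.prod fun i k => (Polynomial.C (x₀ i) + Polynomial.C (ω i) * Polynomial.X) ^ k).natDegree
      ≤ (α.prod fun i k => (Polynomial.C (x₀ i) + Polynomial.C (ω i) * Polynomial.X) ^ k).natDegree := by
        rw [Polynomial.algebraMap_eq]
        exact Polynomial.natDegree_C_mul_le _ _
    _ ≤ ∑ i ∈ α.support, ((Polynomial.C (x₀ i) + Polynomial.C (ω i) * Polynomial.X) ^ (α i)).natDegree := by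
        rw [Finsupp.prod]
        exact Polynomial.natDegree_prod_le _ _
    _ ≤ ∑ i ∈ α.support, α i := by
        apply Finset.sum_le_sum
        intro i _
        calc ((Polynomial.C (x₀ i) + Polynomial.C (ω i) * Polynomial.X) ^ (α i)).natDegree
            ≤ (α i) * (Polynomial.C (x₀ i) + Polynomial.C (ω i) * Polynomial.X).natDegree :=
              Polynomial.natDegree_pow_le
          _ ≤ (α i) * 1 := by
              apply Nat.mul_le_mul_left
              apply le_trans (Polynomial.natDegree_add_le _ _)
              simp only [Polynomial.natDegree_C, max_le_iff]
              refine ⟨Nat.zero_le _, ?_⟩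
              apply le_trans (Polynomial.natDegree_mul_le)
              simp
          _ = α i := Nat.mul_one _
    _ = α.sum fun _ k => k := rfl
    _ ≤ P.totalDegree := MvPolynomial.le_totalDegree hα
    _ ≤ d := hP

open MeasureTheory in
/-- van der Corput sublevel-set estimate: For a real polynomial
`Q_λ` of degree at most `d` on `ℝᵐ` with coefficient norm
`⟦λ⟧ = Σ_{1≤|α|≤d}|λ_α| + |Q_λ(0)|` (i.e. the sum of the absolute values of all
its coefficients), the measure of `{x ∈ B₁ : |Q_λ(x)| ≤ ρ}` is at most
`C(m,d)·ρ^{1/d}·⟦λ⟧^{-1/d}` for every `ρ > 0`. -/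
theorem stmt_7 (m d : ℕ) (hm : 1 ≤ m) (hd : 1 ≤ d) :
    ∃ C : ℝ, 0 < C ∧ ∀ P : MvPolynomial (Fin m) ℝ, P.totalDegree ≤ d →
      0 < ∑ α ∈ P.support, |MvPolynomial.coeff α P| →
      ∀ ρ : ℝ, 0 < ρ →
      MeasureTheory.volume
          {x : EuclideanSpace ℝ (Fin m) |
            ‖x‖ ≤ 1 ∧ |MvPolynomial.eval (fun i => x i) P| ≤ ρ}
        ≤ ENNReal.ofReal
            (C * ρ ^ ((d : ℝ)⁻¹)
              * (∑ α ∈ P.support, |MvPolynomial.coeff α P|) ^ (-(d : ℝ)⁻¹)) := by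
  classical
  obtain ⟨c, hc0, hc⟩ := vdc_exists_good_point m d hm hd
  set S : ℝ := ((volume : Measure (EuclideanSpace ℝ (Fin m))).toSphere Set.univ).toReal with hS
  have hS0 : 0 ≤ S := ENNReal.toReal_nonneg
  set K : ℝ := ((d:ℝ)+1) * ((((d:ℝ)+1) * 3^d) / c) ^ ((d:ℝ)⁻¹) with hK
  have hK0 : 0 < K := by positivity
  refine ⟨S * 2^(m-1) * K + 1, by positivity, ?_⟩
  intro P hP hN ρ hρ
  set N := ∑ α ∈ P.support, |MvPolynomial.coeff α P| with hNdef
  obtain ⟨x₀, hx₀n, hx₀⟩ := hc P hP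
  set M : ℝ := c * N with hM
  have hM0 : 0 < M := by positivity
  haveI : Nonempty (Fin m) := ⟨⟨0, hm⟩⟩
  haveI : Nontrivial (EuclideanSpace ℝ (Fin m)) :=
    (WithLp.equiv 2 (Fin m → ℝ)).nontrivial
  set E := {x : EuclideanSpace ℝ (Fin m) |
      ‖x‖ ≤ 1 ∧ |MvPolynomial.eval (fun i => x i) P| ≤ ρ} with hE
  have hPcont : Continuous
      fun x : EuclideanSpace ℝ (Fin m) => MvPolynomial.eval (fun i => x i) P := by
    exact (MvPolynomial.continuous_eval (p := P)).comp
      (continuous_pi fun i => (EuclideanSpace.proj i).continuous)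
  have hEclosed : IsClosed E := by
    rw [hE, Set.setOf_and]
    exact (isClosed_le continuous_norm continuous_const).inter
      (isClosed_le (continuous_abs.comp hPcont) continuous_const)
  set E' : Set (EuclideanSpace ℝ (Fin m)) := (fun y => x₀ + y) ⁻¹' E with hE'
  have hE'closed : IsClosed E' := hEclosed.preimage (continuous_const.add continuous_id)
  have hvolE : volume E = volume E' := (measure_preimage_add volume x₀ E).symm
  set n := Module.finrank ℝ (EuclideanSpace ℝ (Fin m)) - 1 with hn
  have hnm : n = m - 1 := by rw [hn, finrank_euclideanSpace_fin]
  set h := homeomorphUnitSphereProd (EuclideanSpace ℝ (Fin m)) with hh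
  have hmp := MeasureTheory.Measure.measurePreserving_homeomorphUnitSphereProd
    (volume : Measure (EuclideanSpace ℝ (Fin m)))
  set μS := (volume : Measure (EuclideanSpace ℝ (Fin m))).toSphere with hμS
  set ν := MeasureTheory.Measure.volumeIoiPow n with hν
  set E'' : Set (({0}ᶜ : Set (EuclideanSpace ℝ (Fin m)))) := Subtype.val ⁻¹' E' with hE''
  have hE''m : MeasurableSet E'' := hE'closed.measurableSet.preimage measurable_subtype_coe
  set B := h.symm ⁻¹' E'' with hB
  have hBm : MeasurableSet B := hE''m.preimage h.symm.continuous.measurable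
  have hEB : volume E' = (μS.prod ν) B := by
    have h1 : (volume : Measure (EuclideanSpace ℝ (Fin m))).comap Subtype.val E''
        = volume E' := by
      rw [comap_subtype_coe_apply
        (measurableSet_singleton (0:EuclideanSpace ℝ (Fin m))).compl volume E'',
        hE'', Subtype.image_preimage_coe]
      rw [Set.inter_comm, ← Set.diff_eq]
      exact measure_diff_null (measure_singleton _)
    have h2 : h ⁻¹' B = E'' := by
      rw [hB, ← Set.preimage_comp]
      have : h.symm ∘ h = id := by
        funext z; simp
      rw [this, Set.preimage_id]
    calc volume E' = (volume.comap Subtype.val) E'' := h1.symm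
      _ = (volume.comap Subtype.val) (h ⁻¹' B) := by rw [h2]
      _ = (μS.prod ν) B := hmp.measure_preimage hBm.nullMeasurableSet
  set s₀ : ℝ := ((d:ℝ)+1) * ((((d:ℝ)+1) * 3^d * ρ) / M) ^ ((d:ℝ)⁻¹) with hs₀
  have hsec : ∀ ω : Metric.sphere (0:EuclideanSpace ℝ (Fin m)) 1,
      ν (Prod.mk ω ⁻¹' B) ≤ ENNReal.ofReal ((2:ℝ)^n) * ENNReal.ofReal s₀ := by
    intro ω
    set Sω := Prod.mk ω ⁻¹' B with hSω
    have hSωm : MeasurableSet Sω := hBm.preimage measurable_prodMk_left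
    have hωn : ‖(ω : EuclideanSpace ℝ (Fin m))‖ = 1 := by
      have := ω.2
      rwa [mem_sphere_iff_norm, sub_zero] at this
    have hmem : ∀ r : Set.Ioi (0:ℝ), r ∈ Sω ↔
        x₀ + (r:ℝ) • (ω : EuclideanSpace ℝ (Fin m)) ∈ E := by
      intro r
      rw [hSω, Set.mem_preimage, hB, Set.mem_preimage, hE'', Set.mem_preimage,
        homeomorphUnitSphereProd_symm_apply_coe, hE', Set.mem_preimage]
    set p := vdcLine P (fun i => x₀ i) (fun i => (ω : EuclideanSpace ℝ (Fin m)) i) with hp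
    have hpdeg : p.natDegree ≤ d := vdcLine_natDegree P hP _ _
    have hp0 : M ≤ |p.eval 0| := by
      rw [hp, vdcLine_eval]
      simpa using hx₀
    have hclosed1 : IsClosed {t : ℝ | |p.eval t| ≤ ρ} :=
      isClosed_le (continuous_abs.comp p.continuous) continuous_const
    have h1D := vdc_oneD d hd p hpdeg ρ M hρ hM0 hp0 hclosed1
    have himg : Subtype.val '' Sω ⊆ Set.Icc (-3:ℝ) 3 ∩ {t : ℝ | |p.eval t| ≤ ρ} := by
      rintro t ⟨r, hr, rfl⟩
      have hmem' := (hmem r).1 hr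
      have hr0 : (0:ℝ) < r := r.2
      have hnorm1 : ‖x₀ + (r:ℝ) • (ω : EuclideanSpace ℝ (Fin m))‖ ≤ 1 := hmem'.1
      have hrval : ‖(r:ℝ) • (ω : EuclideanSpace ℝ (Fin m))‖ = (r:ℝ) := by
        rw [norm_smul, hωn, Real.norm_eq_abs, abs_of_pos hr0, mul_one]
      have hrle : (r:ℝ) ≤ 2 := by
        have h2 : ‖(r:ℝ) • (ω : EuclideanSpace ℝ (Fin m))‖
            ≤ ‖x₀ + (r:ℝ) • (ω : EuclideanSpace ℝ (Fin m))‖ + ‖x₀‖ := by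
          have := norm_sub_le (x₀ + (r:ℝ) • (ω : EuclideanSpace ℝ (Fin m))) x₀
          simpa using this
        rw [hrval] at h2
        linarith
      refine ⟨⟨by linarith, by linarith⟩, ?_⟩
      show |p.eval (r:ℝ)| ≤ ρ
      rw [hp, vdcLine_eval]
      have hco : (fun i => x₀ i + (ω : EuclideanSpace ℝ (Fin m)) i * (r:ℝ))
          = fun i => (x₀ + (r:ℝ) • (ω : EuclideanSpace ℝ (Fin m))) i := by
        funext i
        simp [mul_comm]
      rw [hco]
      exact hmem'.2
    have hvol1 : ((volume : Measure ℝ).comap Subtype.val) Sω ≤ ENNReal.ofReal s₀ := by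
      rw [comap_subtype_coe_apply measurableSet_Ioi]
      exact le_trans (measure_mono himg) h1D
    calc ν Sω = ∫⁻ r in Sω, ENNReal.ofReal ((r:ℝ)^n)
          ∂((volume : Measure ℝ).comap Subtype.val) := by
          rw [hν, MeasureTheory.Measure.volumeIoiPow, withDensity_apply _ hSωm]
      _ ≤ ∫⁻ _r in Sω, ENNReal.ofReal ((2:ℝ)^n)
          ∂((volume : Measure ℝ).comap Subtype.val) := by
          apply setLIntegral_mono measurable_const
          intro r hr
          apply ENNReal.ofReal_le_ofReal
          have hr0 : (0:ℝ) < r := r.2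
          have hrle : (r:ℝ) ≤ 2 := by
            have hmem' := (hmem r).1 hr
            have hnorm1 : ‖x₀ + (r:ℝ) • (ω : EuclideanSpace ℝ (Fin m))‖ ≤ 1 := hmem'.1
            have hrval : ‖(r:ℝ) • (ω : EuclideanSpace ℝ (Fin m))‖ = (r:ℝ) := by
              rw [norm_smul, hωn, Real.norm_eq_abs, abs_of_pos hr0, mul_one]
            have h2 := norm_sub_le (x₀ + (r:ℝ) • (ω : EuclideanSpace ℝ (Fin m))) x₀
            simp only [add_sub_cancel_left] at h2
            rw [hrval] at h2
            linarith [hx₀n]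
          exact pow_le_pow_left₀ hr0.le hrle n
      _ = ENNReal.ofReal ((2:ℝ)^n) * ((volume : Measure ℝ).comap Subtype.val) Sω := by
          rw [setLIntegral_const]
      _ ≤ ENNReal.ofReal ((2:ℝ)^n) * ENNReal.ofReal s₀ := by
          exact mul_le_mul_right hvol1 _
  have main : volume E ≤ μS Set.univ * (ENNReal.ofReal ((2:ℝ)^n) * ENNReal.ofReal s₀) := by
    rw [hvolE, hEB, MeasureTheory.Measure.prod_apply hBm]
    calc ∫⁻ ω, ν (Prod.mk ω ⁻¹' B) ∂μS
        ≤ ∫⁻ _ω, ENNReal.ofReal ((2:ℝ)^n) * ENNReal.ofReal s₀ ∂μS :=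
          lintegral_mono fun ω => hsec ω
      _ = μS Set.univ * (ENNReal.ofReal ((2:ℝ)^n) * ENNReal.ofReal s₀) := by
          rw [lintegral_const, mul_comm]
  have hμSfin : μS Set.univ ≠ ⊤ := measure_ne_top _ _
  have hμSof : μS Set.univ = ENNReal.ofReal S := by
    rw [hS, ENNReal.ofReal_toReal hμSfin]
  have hfinal : S * ((2:ℝ)^n * s₀) ≤
      (S * 2^(m-1) * K + 1) * ρ ^ ((d:ℝ)⁻¹) * N ^ (-(d:ℝ)⁻¹) := by
    have hs₀eq : s₀ = K * (ρ ^ ((d:ℝ)⁻¹) * N ^ (-(d:ℝ)⁻¹)) := by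
      rw [hs₀, hK]
      have harg : (((d:ℝ)+1) * 3^d * ρ) / M = ((((d:ℝ)+1) * 3^d) / c) * ρ * N⁻¹ := by
        rw [hM]; field_simp
      rw [harg]
      rw [Real.mul_rpow (by positivity) (by positivity),
        Real.mul_rpow (by positivity) (by positivity),
        Real.inv_rpow hN.le, ← Real.rpow_neg hN.le]
      ring
    rw [hs₀eq, hnm]
    have hrn : 0 ≤ ρ ^ ((d:ℝ)⁻¹) * N ^ (-(d:ℝ)⁻¹) := by positivity
    have h1 : S * ((2:ℝ)^(m-1) * (K * (ρ ^ ((d:ℝ)⁻¹) * N ^ (-(d:ℝ)⁻¹))))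
        = (S * 2^(m-1) * K) * (ρ ^ ((d:ℝ)⁻¹) * N ^ (-(d:ℝ)⁻¹)) := by ring
    rw [h1]
    have h2 : (S * 2^(m-1) * K) ≤ S * 2^(m-1) * K + 1 := by linarith
    calc (S * 2^(m-1) * K) * (ρ ^ ((d:ℝ)⁻¹) * N ^ (-(d:ℝ)⁻¹))
        ≤ (S * 2^(m-1) * K + 1) * (ρ ^ ((d:ℝ)⁻¹) * N ^ (-(d:ℝ)⁻¹)) :=
          mul_le_mul_of_nonneg_right h2 hrn
      _ = (S * 2^(m-1) * K + 1) * ρ ^ ((d:ℝ)⁻¹) * N ^ (-(d:ℝ)⁻¹) := by ring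
  calc volume E ≤ μS Set.univ * (ENNReal.ofReal ((2:ℝ)^n) * ENNReal.ofReal s₀) := main
    _ = ENNReal.ofReal S * (ENNReal.ofReal ((2:ℝ)^n) * ENNReal.ofReal s₀) := by rw [hμSof]
    _ = ENNReal.ofReal (S * ((2:ℝ)^n * s₀)) := by
        rw [← ENNReal.ofReal_mul (by positivity), ← ENNReal.ofReal_mul hS0]
    _ ≤ ENNReal.ofReal ((S * 2^(m-1) * K + 1) * ρ ^ ((d:ℝ)⁻¹) * N ^ (-(d:ℝ)⁻¹)) :=
        ENNReal.ofReal_le_ofReal hfinal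
end

section
/- Let Q(y) = Σᵢθᵢyᵢ² with θᵢ ∈ {±1}, n ≥ 2, and suppose p_j = C·Q^k with C ≠ 0 and j = 2k ≥ 2 (p_j is Q-type). Then there exists a multi-index γ with |γ| = 2 such that D_{j,γ} ≢ 0. In fact, if l ≠ 1 and γ = (2,0,...,0) ∈ ℤ^{n-1}_{≥0}, the monomial u_l^{2k} occurs in D_{2k,γ}(ũ) with nonzero coefficient. -/
open MvPolynomial

/-- Multi-index partial derivative `∂_α p` of a multivariate polynomial. -/
noncomputable def mderiv {n : ℕ} (α : Fin n → ℕ) (p : MvPolynomial (Fin n) ℝ) :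
    MvPolynomial (Fin n) ℝ :=
  (List.finRange n).foldr (fun i q => (fun r => MvPolynomial.pderiv i r)^[α i] q) p

/-- `α! = ∏ᵢ (αᵢ)!` for a multi-index. -/
def mfact {n : ℕ} (α : Fin n → ℕ) : ℕ := ∏ i, (α i).factorial

/-- `|α| = Σᵢ αᵢ` for a multi-index. -/
def mdeg {n : ℕ} (α : Fin n → ℕ) : ℕ := ∑ i, α i

/-- The monomial `w^α = ∏ᵢ wᵢ^{αᵢ}` as a polynomial. -/
noncomputable def monX {n : ℕ} (α : Fin n → ℕ) : MvPolynomial (Fin n) ℝ :=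
  ∏ i, (X i : MvPolynomial (Fin n) ℝ) ^ α i

/-- The polynomial `B_{j,γ}` attached to `p` and a distinguished coordinate `l`:
`B_{j,γ}(w) = Σ_{α≤γ} (-1)^{|α|}/(α!(γ−α)!) (∂_{(α;|γ−α|)}p)(w)·w^{(γ−α;|α|)}`,
where multi-indices `γ, α` satisfy `γ l = 0` and `(β;k)` inserts `k` in the
`l`-th coordinate (realized here by `Function.update`). -/
noncomputable def Bpoly {n : ℕ} (l : Fin n) (γ : Fin n → ℕ)
    (p : MvPolynomial (Fin n) ℝ) : MvPolynomial (Fin n) ℝ :=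
  ∑ α ∈ Finset.Iic γ,
    (C ((-1 : ℝ) ^ (mdeg α) / ((mfact α : ℝ) * (mfact (γ - α) : ℝ))) :
        MvPolynomial (Fin n) ℝ) *
      mderiv (Function.update α l (mdeg (γ - α))) p *
      monX (Function.update (γ - α) l (mdeg α))

/-- The twisting substitution `u ↦ ũ = (θ₁u₁,…,θₙuₙ)` as polynomials. -/
noncomputable def tw {n : ℕ} (θ : Fin n → ℝ) : Fin n → MvPolynomial (Fin n) ℝ :=
  fun i => C (θ i) * X i

/-- The twisted monomial `ũ^α = ∏ᵢ (θᵢuᵢ)^{αᵢ}` as a polynomial in `u`. -/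
noncomputable def monTw {n : ℕ} (θ : Fin n → ℝ) (α : Fin n → ℕ) :
    MvPolynomial (Fin n) ℝ :=
  ∏ i, (C (θ i) * X i : MvPolynomial (Fin n) ℝ) ^ α i

/-- The polynomial `D_{j,γ}` (viewed as a polynomial in `u`):
`D_{j,γ}(ũ) = Σ_{α≤γ} Σ_{|β|=j−|γ|} (-1)^{|α|}/(α!β!(γ−α)!)
  (∂_{(α;|γ−α|)+β}p_j)(ũ) u^β ũ^{(γ−α;|α|)}`,
where `(δ;k)` inserts `k` in the `l`-th coordinate. -/
noncomputable def Dpoly {n : ℕ} (θ : Fin n → ℝ) (l : Fin n) (j : ℕ)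
    (γ : Fin n → ℕ) (p : MvPolynomial (Fin n) ℝ) : MvPolynomial (Fin n) ℝ :=
  ∑ α ∈ Finset.Iic γ, ∑ β ∈ Finset.Nat.antidiagonalTuple n (j - mdeg γ),
    (C ((-1 : ℝ) ^ (mdeg α) /
        ((mfact α : ℝ) * (mfact β : ℝ) * (mfact (γ - α) : ℝ))) :
        MvPolynomial (Fin n) ℝ) *
      MvPolynomial.aeval (tw θ) (mderiv (Function.update α l (mdeg (γ - α)) + β) p) *
      monX β * monTw θ (Function.update (γ - α) l (mdeg α))


lemma iter_pderiv_monomial {n : ℕ} (i : Fin n) (t : ℕ) (s : Fin n →₀ ℕ) (a : ℝ) :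
    (fun r => MvPolynomial.pderiv i r)^[t] (monomial s a)
      = monomial (s - Finsupp.single i t) (a * ((s i).descFactorial t : ℝ)) := by
  induction t with
  | zero => simp
  | succ t ih =>
      rw [Function.iterate_succ_apply', ih, pderiv_monomial]
      congr 1
      · rw [tsub_tsub, ← Finsupp.single_add]
      · have hs : (s - Finsupp.single i t) i = s i - t := by
          simp [Finsupp.tsub_apply]
        rw [hs, Nat.descFactorial_succ]
        push_cast
        ring

lemma foldr_monomial {n : ℕ} (δ : Fin n → ℕ) (L : List (Fin n)) (hL : L.Nodup)
    (s : Fin n →₀ ℕ) (a : ℝ) :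
    L.foldr (fun i q => (fun r => MvPolynomial.pderiv i r)^[δ i] q) (monomial s a)
      = monomial (s - (L.map (fun i => Finsupp.single i (δ i))).sum)
          (a * ((L.map (fun i => ((s i).descFactorial (δ i) : ℝ))).prod)) := by
  induction L with
  | nil => simp
  | cons i L ih =>
      obtain ⟨hi, hL⟩ := List.nodup_cons.mp hL
      rw [List.foldr_cons, ih hL, iter_pderiv_monomial]
      have hz : ((L.map (fun i => Finsupp.single i (δ i))).sum) i = 0 := by
        rw [← Finsupp.applyAddHom_apply, map_list_sum, List.map_map]
        apply List.sum_eq_zero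
        intro x hx
        simp only [List.mem_map] at hx
        obtain ⟨j, hj, rfl⟩ := hx
        have : j ≠ i := fun h => hi (h ▸ hj)
        simp [Finsupp.single_apply, this]
      have hs : (s - (L.map (fun i => Finsupp.single i (δ i))).sum) i = s i := by
        simp [Finsupp.tsub_apply, hz]
      rw [hs]
      congr 1
      · rw [tsub_tsub, List.map_cons, List.sum_cons, add_comm]
      · rw [List.map_cons, List.prod_cons]; ring

lemma mderiv_monomial {n : ℕ} (δ : Fin n → ℕ) (s : Fin n →₀ ℕ) (a : ℝ) :
    mderiv δ (monomial s a)
      = monomial (s - Finsupp.equivFunOnFinite.symm δ)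
          (a * ∏ i, ((s i).descFactorial (δ i) : ℝ)) := by
  rw [mderiv, foldr_monomial δ _ (List.nodup_finRange n)]
  have hsum : ((List.finRange n).map (fun i => Finsupp.single i (δ i))).sum
      = Finsupp.equivFunOnFinite.symm δ := by
    ext j
    rw [← Finsupp.applyAddHom_apply, map_list_sum, List.map_map]
    have h2 : ((List.finRange n).map fun i => (Finsupp.applyAddHom j) (Finsupp.single i (δ i))).sum
        = ∑ i : Fin n, Finsupp.single i (δ i) j := by
      rw [Fin.sum_univ_def]; rfl
    simp only [Function.comp_def]
    rw [h2]
    simp [Finsupp.single_apply]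
  rw [hsum]
  congr 1

noncomputable def mderivL {n : ℕ} (δ : Fin n → ℕ) :
    MvPolynomial (Fin n) ℝ →ₗ[ℝ] MvPolynomial (Fin n) ℝ :=
  (List.finRange n).foldr
    (fun i f => (((MvPolynomial.pderiv i).toLinearMap :
        Module.End ℝ (MvPolynomial (Fin n) ℝ)) ^ (δ i)) ∘ₗ f)
    LinearMap.id

lemma mderiv_eq_mderivL {n : ℕ} (δ : Fin n → ℕ) (p : MvPolynomial (Fin n) ℝ) :
    mderiv δ p = mderivL δ p := by
  rw [mderiv, mderivL]
  induction (List.finRange n) with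
  | nil => simp
  | cons i L ih =>
      simp only [List.foldr_cons, LinearMap.comp_apply, ih, Module.End.pow_apply]
      rfl

lemma aeval_tw_monomial {n : ℕ} (θ : Fin n → ℝ) (s : Fin n →₀ ℕ) (a : ℝ) :
    aeval (tw θ) (monomial s a) = monomial s (a * ∏ i, θ i ^ s i) := by
  rw [aeval_monomial, monomial_eq,
    Finsupp.prod_fintype _ _ (fun i => pow_zero _),
    Finsupp.prod_fintype _ _ (fun i => pow_zero _)]
  simp only [tw, mul_pow, ← C_pow]
  rw [Finset.prod_mul_distrib, ← map_prod, algebraMap_eq, map_mul]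
  ring

lemma coeff_zero_aeval_tw_mderiv {n : ℕ} (θ : Fin n → ℝ) (δ : Fin n → ℕ)
    (p : MvPolynomial (Fin n) ℝ) :
    coeff 0 (aeval (tw θ) (mderiv δ p))
      = (mfact δ : ℝ) * coeff (Finsupp.equivFunOnFinite.symm δ) p := by
  set F : (Fin n →₀ ℕ) := Finsupp.equivFunOnFinite.symm δ with hF
  have hFi : ∀ i, F i = δ i := fun i => by simp [hF]
  conv_lhs => rw [p.as_sum]
  rw [mderiv_eq_mderivL, map_sum, map_sum, coeff_sum]
  have hterm : ∀ s : Fin n →₀ ℕ,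
      coeff 0 (aeval (tw θ) (mderivL δ (monomial s (coeff s p))))
      = if s - F = 0 then
          (coeff s p * ∏ i, ((s i).descFactorial (δ i) : ℝ)) * ∏ i, θ i ^ ((s - F) i)
        else 0 := by
    intro s
    rw [← mderiv_eq_mderivL, mderiv_monomial, ← hF, aeval_tw_monomial, coeff_monomial]
  rw [Finset.sum_congr rfl (fun s _ => hterm s)]
  rw [Finset.sum_eq_single F]
  · have h0 : F - F = (0 : Fin n →₀ ℕ) := by simp
    rw [if_pos h0]
    have h1 : ∀ i, ((F i).descFactorial (δ i) : ℝ) = ((δ i).factorial : ℝ) := by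
      intro i; rw [hFi i, Nat.descFactorial_self]
    rw [Finset.prod_congr rfl (fun i _ => h1 i)]
    have h2 : ∀ i, θ i ^ ((F - F) i) = 1 := by intro i; simp
    rw [Finset.prod_congr rfl (fun i _ => h2 i), Finset.prod_const_one, mul_one, mfact]
    push_cast
    ring
  · intro s _ hs
    by_cases hle : s ≤ F
    · have h0 : s - F = (0 : Fin n →₀ ℕ) := by
        rwa [tsub_eq_zero_iff_le]
      rw [if_pos h0]
      have : ∃ i, s i < δ i := by
        by_contra hcon
        push_neg at hcon
        exact hs (le_antisymm hle (fun i => by rw [hFi i]; exact hcon i))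
      obtain ⟨i, hi⟩ := this
      have : ((s i).descFactorial (δ i) : ℝ) = 0 := by
        rw [Nat.descFactorial_eq_zero_iff_lt.mpr hi]; norm_num
      rw [Finset.prod_eq_zero (Finset.mem_univ i) this]
      ring
    · rw [if_neg]
      intro h0
      exact hle (tsub_eq_zero_iff_le.mp h0)
  · intro hF0
    rw [MvPolynomial.notMem_support_iff.mp hF0]
    simp

section Qcoeff
variable {n : ℕ} (θ : Fin n → ℝ)

noncomputable def Qp : MvPolynomial (Fin n) ℝ := ∑ i, C (θ i) * X i ^ 2

lemma Qp_eq : Qp θ = ∑ i, monomial (Finsupp.single i 2) (θ i) := by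
  unfold Qp
  exact Finset.sum_congr rfl fun i _ => C_mul_X_pow_eq_monomial

lemma coeff_mul_Qp (μ : Fin n →₀ ℕ) (q : MvPolynomial (Fin n) ℝ) :
    coeff μ (q * Qp θ)
      = ∑ i, if 2 ≤ μ i then coeff (μ - Finsupp.single i 2) q * θ i else 0 := by
  rw [Qp_eq, Finset.mul_sum, coeff_sum]
  refine Finset.sum_congr rfl fun i _ => ?_
  rw [coeff_mul_monomial']
  simp [Finsupp.single_le_iff]

lemma coeffA (l : Fin n) (k : ℕ) :
    coeff (Finsupp.single l (2 * k)) ((Qp θ) ^ k) = θ l ^ k := by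
  induction k with
  | zero => simp
  | succ k ih =>
      rw [pow_succ, coeff_mul_Qp]
      rw [Finset.sum_eq_single l]
      · have h2 : 2 ≤ (Finsupp.single l (2 * (k+1))) l := by simp
        rw [if_pos h2]
        have : Finsupp.single l (2 * (k+1)) - Finsupp.single l 2
            = Finsupp.single l (2 * k) := by
          rw [← Finsupp.single_tsub]; congr 1
        rw [this, ih, pow_succ]
      · intro i _ hil
        rw [if_neg]
        simp [Finsupp.single_apply, Ne.symm hil]
      · intro h; exact absurd (Finset.mem_univ l) h

lemma coeffB (m l : Fin n) (hml : m ≠ l) (k : ℕ) :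
    coeff (Finsupp.single m 2 + Finsupp.single l (2 * k)) ((Qp θ) ^ (k + 1))
      = (k + 1 : ℝ) * θ m * θ l ^ k := by
  induction k with
  | zero =>
      rw [pow_one]
      simp only [mul_zero, Finsupp.single_zero, add_zero]
      rw [Qp_eq, coeff_sum]
      rw [Finset.sum_eq_single m]
      · simp
      · intro i _ him
        rw [coeff_monomial, if_neg]
        intro h
        rcases (Finsupp.single_eq_single_iff _ _ _ _).mp h with ⟨h1, _⟩ | ⟨h1, _⟩
        · exact him h1
        · exact absurd h1 (by norm_num)
      · intro h; exact absurd (Finset.mem_univ m) h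
  | succ k ih =>
      set μ := Finsupp.single m 2 + Finsupp.single l (2 * (k+1)) with hμ
      rw [pow_succ, coeff_mul_Qp]
      have hμm : μ m = 2 := by simp [hμ, Finsupp.single_apply, hml, Ne.symm hml]
      have hμl : μ l = 2 * (k + 1) := by simp [hμ, Finsupp.single_apply, hml, Ne.symm hml]
      have hrest : ∀ i, i ≠ m → i ≠ l → μ i = 0 := by
        intro i him hil
        simp [hμ, Finsupp.single_apply, Ne.symm him, Ne.symm hil]
      rw [← Finset.sum_subset (Finset.subset_univ ({m, l} : Finset (Fin n)))]
      · rw [Finset.sum_pair hml]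
        have hm2 : 2 ≤ μ m := by omega
        have hl2 : 2 ≤ μ l := by omega
        rw [if_pos hm2, if_pos hl2]
        have e1 : μ - Finsupp.single m 2 = Finsupp.single l (2 * (k+1)) := by
          rw [hμ, add_tsub_cancel_left]
        have e2 : μ - Finsupp.single l 2 = Finsupp.single m 2 + Finsupp.single l (2 * k) := by
          rw [hμ, add_tsub_assoc_of_le (by rw [Finsupp.single_le_iff]; simp)]
          rw [← Finsupp.single_tsub]
          congr 1
        rw [e1, e2, coeffA, ih]
        push_cast
        ring
      · intro i _ hi
        simp only [Finset.mem_insert, Finset.mem_singleton, not_or] at hi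
        rw [if_neg]
        rw [hrest i hi.1 hi.2]
        omega
end Qcoeff

lemma monX_eq {n : ℕ} (β : Fin n → ℕ) :
    monX β = monomial (Finsupp.equivFunOnFinite.symm β) (1 : ℝ) := by
  rw [monomial_eq, Finsupp.prod_fintype _ _ (fun i => pow_zero _), map_one, one_mul, monX]
  exact Finset.prod_congr rfl fun i _ => by simp

lemma monTw_eq {n : ℕ} (θ : Fin n → ℝ) (δ : Fin n → ℕ) :
    monTw θ δ = monomial (Finsupp.equivFunOnFinite.symm δ) (∏ i, θ i ^ δ i) := by
  have : monTw θ δ = C (∏ i, θ i ^ δ i) * monX δ := by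
    unfold monTw monX
    simp only [mul_pow, ← C_pow]
    rw [Finset.prod_mul_distrib, ← map_prod]
  rw [this, monX_eq, C_mul_monomial, mul_one]

lemma coeff_term {n : ℕ} (θ : Fin n → ℝ) (a : ℝ) (q : MvPolynomial (Fin n) ℝ)
    (β δ' : Fin n → ℕ) (μ : Fin n →₀ ℕ) :
    coeff μ (C a * q * monX β * monTw θ δ')
      = if Finsupp.equivFunOnFinite.symm β + Finsupp.equivFunOnFinite.symm δ' ≤ μ then
          (a * ∏ i, θ i ^ δ' i) *
            coeff (μ - (Finsupp.equivFunOnFinite.symm β + Finsupp.equivFunOnFinite.symm δ')) q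
        else 0 := by
  rw [mul_assoc, monX_eq, monTw_eq, monomial_mul, one_mul, coeff_mul_monomial']
  split_ifs with h
  · rw [coeff_C_mul]; ring
  · rfl

lemma key {n : ℕ} (θ : Fin n → ℝ) (hθ : ∀ i, θ i = 1 ∨ θ i = -1)
    (l m : Fin n) (hml : m ≠ l) (k : ℕ) (hk : 1 ≤ k) (c : ℝ)
    (p : MvPolynomial (Fin n) ℝ) (hp : p = C c * (Qp θ) ^ k) :
    coeff (Finsupp.single l (2 * k))
        (Dpoly θ l (2 * k) (fun i => if i = m then 2 else 0) p)
      = c * k * θ m * θ l ^ (k - 1) := by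
  have hlm : l ≠ m := Ne.symm hml
  set γ : Fin n → ℕ := fun i => if i = m then 2 else 0 with hγ
  have hγl : γ l = 0 := by simp [hγ, hlm]
  have hmdeg : mdeg γ = 2 := by simp [mdeg, hγ]
  have hmfactγ : mfact γ = 2 := by
    simp [mfact, hγ, apply_ite Nat.factorial]
  set β₀ : Fin n → ℕ := fun i => if i = l then 2 * k - 2 else 0 with hβ₀
  rw [Dpoly, hmdeg, coeff_sum]
  rw [Finset.sum_eq_single γ]
  · -- α = γ
    rw [coeff_sum, Finset.sum_eq_single β₀]
    · -- β = β₀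
      have hγγ : γ - γ = (0 : Fin n → ℕ) := by funext i; simp
      have hmdeg0 : mdeg (γ - γ) = 0 := by rw [hγγ]; simp [mdeg]
      have hupγ : Function.update γ l (mdeg (γ - γ)) = γ := by
        rw [hmdeg0]
        funext i
        by_cases hi : i = l
        · subst hi; rw [Function.update_self, hγl]
        · rw [Function.update_of_ne hi]
      have hδ' : Function.update (γ - γ) l (mdeg γ) = fun i => if i = l then 2 else 0 := by
        rw [hγγ, hmdeg]
        funext i
        by_cases hi : i = l
        · subst hi; rw [Function.update_self]; simp
        · rw [Function.update_of_ne hi]; simp [hi]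
      rw [hupγ, hδ', coeff_term]
      have hS : Finsupp.equivFunOnFinite.symm β₀
          + Finsupp.equivFunOnFinite.symm (fun i => if i = l then 2 else 0)
          = Finsupp.single l (2 * k) := by
        ext j
        by_cases hj : j = l
        · subst hj
          simp [hβ₀, Finsupp.single_apply]
          omega
        · simp [hβ₀, hj, Finsupp.single_apply, Ne.symm hj]
      rw [hS, if_pos le_rfl]
      simp only [tsub_self]
      have hθprod : (∏ i, θ i ^ (if i = l then 2 else 0)) = 1 := by
        rw [Finset.prod_eq_single l]
        · rcases hθ l with h | h <;> rw [h] <;> norm_num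
        · intro i _ hi; simp [hi]
        · intro h; exact absurd (Finset.mem_univ l) h
      rw [hθprod, coeff_zero_aeval_tw_mderiv]
      have hFD : Finsupp.equivFunOnFinite.symm (γ + β₀)
          = Finsupp.single m 2 + Finsupp.single l (2 * (k - 1)) := by
        ext j
        by_cases hjm : j = m
        · subst hjm
          simp [hγ, hβ₀, hml, Finsupp.single_apply, Ne.symm hml]
        · by_cases hjl : j = l
          · subst hjl
            simp [hγ, hβ₀, hlm, Finsupp.single_apply, hjm, Ne.symm hjm]
            omega
          · simp [hγ, hβ₀, hjm, hjl, Finsupp.single_apply, Ne.symm hjm, Ne.symm hjl]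
      have hmfactD : mfact (γ + β₀) = 2 * (2 * k - 2).factorial := by
        rw [mfact, ← Finset.prod_subset (Finset.subset_univ ({m, l} : Finset (Fin n)))]
        · rw [Finset.prod_pair hml]
          have h1 : (γ + β₀) m = 2 := by simp [hγ, hβ₀, hml]
          have h2 : (γ + β₀) l = 2 * k - 2 := by simp [hγ, hβ₀, hlm]
          rw [h1, h2]
          norm_num [Nat.factorial]
        · intro i _ hi
          simp only [Finset.mem_insert, Finset.mem_singleton, not_or] at hi
          have : (γ + β₀) i = 0 := by simp [hγ, hβ₀, hi.1, hi.2]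
          rw [this]
          simp
      have hmfactβ₀ : mfact β₀ = (2 * k - 2).factorial := by
        simp [mfact, hβ₀, apply_ite Nat.factorial]
      have hmfact0 : mfact (0 : Fin n → ℕ) = 1 := by
        simp [mfact]
      rw [hmfactD, hFD, hp, coeff_C_mul]
      have hk' : k - 1 + 1 = k := by omega
      have hcoeffB := coeffB θ m l hml (k - 1)
      rw [hk'] at hcoeffB
      rw [hcoeffB, hmdeg, hmfactγ, hmfactβ₀, hmfact0]
      have hfac : ((2 * k - 2).factorial : ℝ) ≠ 0 := by
        exact_mod_cast Nat.factorial_ne_zero _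
      have hkcast : ((k - 1 : ℕ) : ℝ) + 1 = (k : ℝ) := by
        rw [Nat.cast_sub hk]; ring
      push_cast
      rw [hkcast]
      field_simp
    · -- β ≠ β₀
      intro β hβ hββ₀
      rw [coeff_term, if_neg]
      intro hle
      rw [Finsupp.le_def] at hle
      have hγγ : γ - γ = (0 : Fin n → ℕ) := by funext i; simp
      have hδ'l : ∀ i, Function.update (γ - γ) l (mdeg γ) i
          = if i = l then 2 else 0 := by
        intro i
        by_cases hi : i = l
        · subst hi; rw [Function.update_self, hmdeg]; simp
        · rw [Function.update_of_ne hi, hγγ]; simp [hi]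
      have hβ0 : ∀ i, i ≠ l → β i = 0 := by
        intro i hi
        have := hle i
        simp only [Finsupp.add_apply, Finsupp.coe_equivFunOnFinite_symm] at this
        rw [hδ'l i] at this
        simp [hi, Finsupp.single_apply, Ne.symm hi] at this
        omega
      have hsum : ∑ i, β i = 2 * k - 2 := Finset.Nat.mem_antidiagonalTuple.mp hβ
      have hβl : β l = 2 * k - 2 := by
        rw [← hsum, Finset.sum_eq_single l]
        · intro i _ hi; exact hβ0 i hi
        · intro h; exact absurd (Finset.mem_univ l) h
      exact hββ₀ (funext fun i => by
        by_cases hi : i = l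
        · subst hi; rw [hβl]; simp [hβ₀]
        · rw [hβ0 i hi]; simp [hβ₀, hi])
    · intro h
      exact absurd (Finset.Nat.mem_antidiagonalTuple.mpr (by simp [hβ₀])) h
  · -- α ≠ γ
    intro α hα hαγ
    rw [coeff_sum]
    apply Finset.sum_eq_zero
    intro β _
    rw [coeff_term, if_neg]
    intro hle
    rw [Finsupp.le_def] at hle
    have hαle : α ≤ γ := Finset.mem_Iic.mp hα
    have hαm : α m < 2 := by
      rcases Nat.lt_or_ge (α m) 2 with h | h
      · exact h
      · exfalso
        apply hαγ
        funext i
        by_cases hi : i = m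
        · rw [hi]
          have h1 := hαle m
          simp only [hγ] at h1 ⊢
          simp at h1 ⊢
          omega
        · have h1 := hαle i
          simp only [hγ] at h1 ⊢
          simp [hi] at h1 ⊢
          omega
    have := hle m
    simp only [Finsupp.add_apply, Finsupp.coe_equivFunOnFinite_symm] at this
    rw [Function.update_of_ne hml] at this
    have hγα : (γ - α) m = 2 - α m := by simp [hγ]
    rw [hγα] at this
    simp [Finsupp.single_apply, hlm, Ne.symm hlm] at this
    omega
  · intro h
    exact absurd (Finset.mem_Iic.mpr le_rfl) h

/-- If `p_j = c·Q^k` is `Q`-type (`c ≠ 0`, `j = 2k ≥ 2`,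
`Q(y) = Σᵢθᵢyᵢ²`), then some `γ` with `|γ| = 2` has `D_{j,γ} ≢ 0`; in fact if
`l ≠ 1` (first coordinate) and `γ = (2,0,…,0)`, the monomial `u_l^{2k}` occurs
in `D_{2k,γ}` with nonzero coefficient. -/
theorem stmt_13 {n : ℕ} (hn : 2 ≤ n) (θ : Fin n → ℝ) (hθ : ∀ i, θ i = 1 ∨ θ i = -1)
    (l : Fin n) (k : ℕ) (hk : 1 ≤ k) (c : ℝ) (hc : c ≠ 0)
    (p : MvPolynomial (Fin n) ℝ)
    (hp : p = C c * (∑ i, C (θ i) * (X i : MvPolynomial (Fin n) ℝ) ^ 2) ^ k) :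
    (∃ γ : Fin n → ℕ, γ l = 0 ∧ mdeg γ = 2 ∧ Dpoly θ l (2 * k) γ p ≠ 0)
    ∧ (l ≠ (⟨0, by omega⟩ : Fin n) →
        MvPolynomial.coeff (Finsupp.single l (2 * k))
          (Dpoly θ l (2 * k)
            (fun i => if i = (⟨0, by omega⟩ : Fin n) then 2 else 0) p) ≠ 0) := by
  have hQ : (∑ i, C (θ i) * (X i : MvPolynomial (Fin n) ℝ) ^ 2) = Qp θ := rfl
  rw [hQ] at hp
  have hne : ∀ m : Fin n, m ≠ l →
      (Dpoly θ l (2 * k) (fun i => if i = m then 2 else 0) p ≠ 0 ∧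
        MvPolynomial.coeff (Finsupp.single l (2 * k))
          (Dpoly θ l (2 * k) (fun i => if i = m then 2 else 0) p) ≠ 0) := by
    intro m hml
    have hkey := key θ hθ l m hml k hk c p hp
    have hθm : θ m ≠ 0 := by rcases hθ m with h | h <;> rw [h] <;> norm_num
    have hθl : θ l ^ (k - 1) ≠ 0 :=
      pow_ne_zero _ (by rcases hθ l with h | h <;> rw [h] <;> norm_num)
    have hkr : (k : ℝ) ≠ 0 := Nat.cast_ne_zero.mpr (by omega)
    have hcoeff : MvPolynomial.coeff (Finsupp.single l (2 * k))
        (Dpoly θ l (2 * k) (fun i => if i = m then 2 else 0) p) ≠ 0 := by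
      rw [hkey]
      exact mul_ne_zero (mul_ne_zero (mul_ne_zero hc hkr) hθm) hθl
    refine ⟨fun h0 => hcoeff ?_, hcoeff⟩
    rw [h0]
    simp
  constructor
  · by_cases hl : l = (⟨0, by omega⟩ : Fin n)
    · have h10 : (⟨1, by omega⟩ : Fin n) ≠ l := by
        rw [hl]; simp [Fin.ext_iff]
      refine ⟨fun i => if i = (⟨1, by omega⟩ : Fin n) then 2 else 0, ?_, ?_,
        (hne _ h10).1⟩
      · simp [Ne.symm h10]
      · simp [mdeg]
    · have h0l : (⟨0, by omega⟩ : Fin n) ≠ l := fun h => hl h.symm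
      refine ⟨fun i => if i = (⟨0, by omega⟩ : Fin n) then 2 else 0, ?_, ?_,
        (hne _ h0l).1⟩
      · simp [hl]
      · simp [mdeg]
  · intro hl0
    exact (hne (⟨0, by omega⟩ : Fin n) (fun h => hl0 h.symm)).2
end

section
/- Let p₂(u) = Σ_{|ω|=2} d_ω u^ω be a quadratic form on ℝⁿ, n ≥ 2, with distinguished coordinates l ≠ m(l), and suppose θ_l = θ_{m(l)}. Writing γ^m(1) for the multi-index of order 1 corresponding to coordinate m(l), one has B_{2,γ^m(1)} ≡ 0 if and only if d_{2e_l} = d_{2e_{m(l)}}, d_{e_l+e_i} = 0 for all i ≠ l, and d_{e_{m(l)}+e_i} = 0 for all i ≠ m(l) (i.e. p₂ is Q-type in coordinates l and m(l)). -/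
open MvPolynomial

lemma coeff_pderiv' {n : ℕ} (i : Fin n) (μ : Fin n →₀ ℕ) (p : MvPolynomial (Fin n) ℝ) :
    coeff μ (pderiv i p) = (μ i + 1) * coeff (μ + Finsupp.single i 1) p := by
  induction p using MvPolynomial.induction_on' with
  | add p q hp hq => simp [hp, hq, mul_add]
  | monomial s a =>
    rw [pderiv_monomial, coeff_monomial, coeff_monomial]
    by_cases hs : s = μ + Finsupp.single i 1
    · subst hs
      simp [mul_comm]
    · rw [if_neg hs]
      split
      · rename_i h
        have hsi : s i = 0 := by
          by_contra h0
          apply hs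
          have hle : Finsupp.single i 1 ≤ s := by
            rw [Finsupp.le_def]
            intro j
            rw [Finsupp.single_apply]
            split
            · rename_i hj; subst hj; omega
            · omega
          rw [← h, tsub_add_cancel_of_le hle]
        simp [hsi]
      · ring

lemma degree_one_single {n : ℕ} (μ : Fin n →₀ ℕ) (h : μ.degree = 1) :
    ∃ j, μ = Finsupp.single j 1 := by
  have h0 : μ ≠ 0 := by rintro rfl; simp [map_zero] at h
  obtain ⟨j, hj⟩ := Finsupp.support_nonempty_iff.mpr h0
  refine ⟨j, ?_⟩
  have hsum : μ j + ∑ i ∈ μ.support.erase j, μ i = 1 := by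
    rw [Finset.add_sum_erase _ _ hj]; exact h
  have hj1 : 1 ≤ μ j := Nat.one_le_iff_ne_zero.mpr (Finsupp.mem_support_iff.mp hj)
  have hμj : μ j = 1 := by omega
  have hrest : ∑ i ∈ μ.support.erase j, μ i = 0 := by omega
  ext i
  by_cases hi : i = j
  · subst hi; simp [hμj]
  · have hzi : μ i = 0 := by
      by_contra hne
      have hi' : i ∈ μ.support.erase j :=
        Finset.mem_erase.mpr ⟨hi, Finsupp.mem_support_iff.mpr hne⟩
      exact hne (Finset.sum_eq_zero_iff.mp hrest i hi')
    simp [Finsupp.single_apply, Ne.symm hi, hzi]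

lemma degree_add' {n : ℕ} (a b : Fin n →₀ ℕ) : (a + b).degree = a.degree + b.degree := by
  have : ∀ c : Fin n →₀ ℕ, c.degree = c.sum fun _ v => v := fun c => rfl
  rw [this, this, this, Finsupp.sum_add_index'] <;> simp

lemma degree_single' {n : ℕ} (j : Fin n) (k : ℕ) : (Finsupp.single j k).degree = k := by
  have : ∀ c : Fin n →₀ ℕ, c.degree = c.sum fun _ v => v := fun c => rfl
  rw [this, Finsupp.sum_single_index]; rfl

lemma mderiv_single {n : ℕ} (i : Fin n) (p : MvPolynomial (Fin n) ℝ) :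
    mderiv (fun j => if j = i then 1 else 0) p = pderiv i p := by
  suffices h : ∀ L : List (Fin n), L.Nodup →
      L.foldr (fun j q => (fun r => pderiv j r)^[if j = i then 1 else 0] q) p
        = if i ∈ L then pderiv i p else p by
    have := h (List.finRange n) (List.nodup_finRange n)
    simpa [mderiv, List.mem_finRange] using this
  intro L
  induction L with
  | nil => simp
  | cons a L ih =>
    intro hL
    obtain ⟨ha, hL'⟩ := List.nodup_cons.mp hL
    by_cases hai : a = i
    · subst hai
      simp [ih hL', ha]
    · simp only [List.foldr_cons, if_neg hai, Function.iterate_zero, id_eq, ih hL',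
        List.mem_cons]
      have : (i = a) = False := by simp [Ne.symm hai]
      simp [this]

lemma monX_single {n : ℕ} (i : Fin n) :
    monX (fun j => if j = i then 1 else 0) = (X i : MvPolynomial (Fin n) ℝ) := by
  rw [monX]
  simp [pow_ite, Finset.prod_ite_eq']

lemma Iic_gamma {n : ℕ} (m : Fin n) :
    Finset.Iic (fun i => if i = m then 1 else 0 : Fin n → ℕ)
      = {0, fun i => if i = m then 1 else 0} := by
  ext α
  simp only [Finset.mem_Iic, Finset.mem_insert, Finset.mem_singleton]
  constructor
  · intro h
    have h' : ∀ j, α j ≤ if j = m then 1 else 0 := fun j => h j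
    by_cases hm : α m = 0
    · left
      funext j
      by_cases hj : j = m
      · subst hj; exact hm
      · have := h' j; simpa [hj] using this
    · right
      funext j
      by_cases hj : j = m
      · rw [if_pos hj]
        have h1 := h' j
        rw [if_pos hj] at h1
        have hm' : α j ≠ 0 := by rw [hj]; exact hm
        omega
      · have := h' j; simpa [hj] using this
  · rintro (rfl | rfl)
    · exact fun j => Nat.zero_le _
    · exact le_rfl

lemma Bpoly_eq {n : ℕ} {l m : Fin n} (hlm : m ≠ l) (p : MvPolynomial (Fin n) ℝ) :
    Bpoly l (fun i => if i = m then 1 else 0) p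
      = pderiv l p * X m - pderiv m p * X l := by
  have hγ0 : (0 : Fin n → ℕ) ≠ (fun i => if i = m then 1 else 0) := by
    intro h
    have := congrFun h m
    simp at this
  have hmdeg0 : mdeg (0 : Fin n → ℕ) = 0 := by simp [mdeg]
  have hmdegγ : mdeg (fun i => if i = m then 1 else 0 : Fin n → ℕ) = 1 := by
    simp [mdeg]
  have hmfact0 : mfact (0 : Fin n → ℕ) = 1 := by simp [mfact]
  have hmfactγ : mfact (fun i => if i = m then 1 else 0 : Fin n → ℕ) = 1 := by
    simp [mfact, apply_ite Nat.factorial]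
  have hsub0 : (fun i => if i = m then 1 else 0 : Fin n → ℕ) - 0
      = (fun i => if i = m then 1 else 0) := by simp
  have hsubγ : (fun i => if i = m then 1 else 0 : Fin n → ℕ)
      - (fun i => if i = m then 1 else 0) = 0 := by
    funext j; simp
  have hupd1 : Function.update (0 : Fin n → ℕ) l 1
      = (fun j => if j = l then 1 else 0) := by
    funext j; simp [Function.update_apply]
  have hupdγ : Function.update (fun i => if i = m then 1 else 0 : Fin n → ℕ) l 0
      = (fun i => if i = m then 1 else 0) := by
    funext j
    rw [Function.update_apply]
    split
    · rename_i hj; subst hj; simp [Ne.symm hlm]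
    · rfl
  rw [Bpoly, Iic_gamma m, Finset.sum_pair hγ0]
  rw [hsub0, hsubγ, hmdeg0, hmdegγ, hmfact0, hmfactγ, hupd1, hupdγ]
  rw [mderiv_single, mderiv_single, monX_single, monX_single]
  push_cast
  simp only [pow_zero, pow_one, mul_one, one_mul, div_one, map_one, map_neg]
  ring

lemma pderiv_homog {n : ℕ} {l : Fin n} {p : MvPolynomial (Fin n) ℝ}
    (hp : p.IsHomogeneous 2)
    (h2 : ∀ i, i ≠ l → coeff (Finsupp.single l 1 + Finsupp.single i 1) p = 0) :
    pderiv l p = C (2 * coeff (Finsupp.single l 2) p) * X l := by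
  ext μ
  rw [coeff_pderiv', coeff_C_mul, coeff_X']
  by_cases hμ : Finsupp.single l 1 = μ
  · subst hμ
    rw [if_pos rfl]
    have : Finsupp.single l 1 + Finsupp.single l 1 = Finsupp.single l 2 := by
      rw [← Finsupp.single_add]
    rw [this, Finsupp.single_eq_same]
    push_cast
    ring
  · rw [if_neg hμ, mul_zero]
    by_cases hd : μ.degree = 1
    · obtain ⟨j, rfl⟩ := degree_one_single μ hd
      have hj : j ≠ l := fun h => hμ (by rw [h])
      rw [add_comm (Finsupp.single j 1), h2 j hj, mul_zero]
    · have : (μ + Finsupp.single l 1).degree ≠ 2 := by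
        rw [degree_add', degree_single']
        omega
      rw [hp.coeff_eq_zero this, mul_zero]

/-- Let `p₂(u) = Σ_{|ω|=2} d_ω u^ω` be a quadratic form on `ℝⁿ`,
with distinguished coordinates `l ≠ m` and `θ_l = θ_m`. Writing `γ^m(1)` for
the order-1 multi-index at coordinate `m`, one has `B_{2,γ^m(1)} ≡ 0` iff
`d_{2e_l} = d_{2e_m}`, `d_{e_l+e_i} = 0` for all `i ≠ l`, and
`d_{e_m+e_i} = 0` for all `i ≠ m` (i.e. `p₂` is `Q`-type in coordinates `l`
and `m`). -/
theorem stmt_14 {n : ℕ} (hn : 2 ≤ n) (θ : Fin n → ℝ) (hθ : ∀ i, θ i = 1 ∨ θ i = -1)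
    (l m : Fin n) (hlm : m ≠ l) (hθlm : θ l = θ m)
    (p : MvPolynomial (Fin n) ℝ) (hp : p.IsHomogeneous 2) :
    Bpoly l (fun i => if i = m then 1 else 0) p = 0 ↔
      (MvPolynomial.coeff (Finsupp.single l 2) p
          = MvPolynomial.coeff (Finsupp.single m 2) p
        ∧ (∀ i, i ≠ l →
            MvPolynomial.coeff (Finsupp.single l 1 + Finsupp.single i 1) p = 0)
        ∧ (∀ i, i ≠ m →
            MvPolynomial.coeff (Finsupp.single m 1 + Finsupp.single i 1) p = 0)) := by
  rw [Bpoly_eq hlm p]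
  constructor
  · intro hB
    have hc : ∀ μ : Fin n →₀ ℕ,
        coeff μ (pderiv l p * X m) = coeff μ (pderiv m p * X l) := by
      intro μ
      have h := congrArg (coeff μ) hB
      rw [coeff_sub, coeff_zero, sub_eq_zero] at h
      exact h
    refine ⟨?_, ?_, ?_⟩
    · have h1 := hc (Finsupp.single l 1 + Finsupp.single m 1)
      rw [coeff_mul_X, add_comm (Finsupp.single l 1), coeff_mul_X,
        coeff_pderiv', coeff_pderiv', Finsupp.single_eq_same, Finsupp.single_eq_same,
        ← Finsupp.single_add, ← Finsupp.single_add] at h1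
      norm_num at h1
      linarith
    · intro i hi
      have h1 := hc (Finsupp.single i 1 + Finsupp.single m 1)
      rw [coeff_mul_X, coeff_pderiv', coeff_mul_X'] at h1
      have hsupp : l ∉ (Finsupp.single i 1 + Finsupp.single m 1).support := by
        simp only [Finsupp.mem_support_iff, Finsupp.add_apply, Finsupp.single_apply,
          if_neg hi, if_neg hlm, add_zero, ne_eq, not_not]
      rw [if_neg hsupp] at h1
      have hil : (Finsupp.single i 1 : Fin n →₀ ℕ) l = 0 := by
        simp [Finsupp.single_apply, hi]
      rw [hil] at h1
      norm_num at h1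
      rw [add_comm (Finsupp.single l 1)]
      exact h1
    · intro i hi
      have h1 := hc (Finsupp.single i 1 + Finsupp.single l 1)
      rw [coeff_mul_X, coeff_pderiv', coeff_mul_X'] at h1
      have hsupp : m ∉ (Finsupp.single i 1 + Finsupp.single l 1).support := by
        simp only [Finsupp.mem_support_iff, Finsupp.add_apply, Finsupp.single_apply,
          if_neg hi, if_neg (Ne.symm hlm), add_zero, ne_eq, not_not]
      rw [if_neg hsupp] at h1
      have him : (Finsupp.single i 1 : Fin n →₀ ℕ) m = 0 := by
        simp [Finsupp.single_apply, hi]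
      rw [him] at h1
      norm_num at h1
      rw [add_comm (Finsupp.single m 1)]
      exact h1.symm
  · rintro ⟨h1, h2, h3⟩
    have hl := pderiv_homog hp h2
    have hm' := pderiv_homog hp h3
    rw [hl, hm', h1]
    ring
end

section
/- Let j be even with p_j Q-type (p_j = C·Q^{j/2}, C ≠ 0, Q(y)=Σθᵢyᵢ²). Then for any order-1 multi-index γ^m(1), |u|²Ξ_{j,γ^m(1)}(ũ) = −θ_lθ_{m(l)}·B_{j,γ^m(1)}(ũ), where Ξ and B are as defined via the Taylor expansion coefficients. -/
open MvPolynomial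

section Aux1
variable {σ : Type*} {R : Type*} [CommSemiring R]

theorem pderiv_comm' (a b : σ) (P : MvPolynomial σ R) :
    pderiv a (pderiv b P) = pderiv b (pderiv a P) := by
  classical
  induction P using MvPolynomial.induction_on' with
  | add p q hp hq => simp [hp, hq]
  | monomial s r =>
    simp only [pderiv_monomial]
    rcases eq_or_ne a b with rfl | hab
    · rfl
    · congr 1
      · rw [tsub_right_comm]
      · rw [Finsupp.tsub_apply, Finsupp.tsub_apply,
          Finsupp.single_eq_of_ne hab, Finsupp.single_eq_of_ne (Ne.symm hab)]
        simp only [tsub_zero]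
        ring

theorem coeff_pderiv'_s17 (i : σ) (P : MvPolynomial σ R) (d : σ →₀ ℕ) :
    coeff d (pderiv i P) = (d i + 1) • coeff (d + Finsupp.single i 1) P := by
  classical
  induction P using MvPolynomial.induction_on' with
  | add p q hp hq => simp [hp, hq]
  | monomial s r =>
    simp only [pderiv_monomial, coeff_monomial]
    by_cases h : s = d + Finsupp.single i 1
    · subst h
      rw [if_pos (add_tsub_cancel_right _ _), if_pos rfl]
      simp [Finsupp.add_apply, Finsupp.single_eq_same, mul_comm, mul_add,
        nsmul_eq_mul]
    · rw [if_neg h, smul_zero]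
      by_cases h2 : s - Finsupp.single i 1 = d
      · have hsi : s i = 0 := by
          by_contra hsi
          apply h
          ext j
          have h3 : s j - (Finsupp.single i 1) j = d j := by
            rw [← Finsupp.tsub_apply, h2]
          have h4 : (Finsupp.single i 1) j = if i = j then 1 else 0 :=
            Finsupp.single_apply
          rw [Finsupp.add_apply, h4]
          rw [h4] at h3
          by_cases hj : i = j
          · subst hj; simp at h3 ⊢; omega
          · simp only [if_neg hj] at h3 ⊢; omega
        rw [if_pos h2, hsi, Nat.cast_zero, mul_zero]
      · rw [if_neg h2]

end Aux1

section Aux2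
variable {n : ℕ} {R : Type*} [CommSemiring R] [Algebra ℝ R]

theorem pderiv_shift (s : Fin n → R) (j : Fin n) (q : MvPolynomial (Fin n) ℝ) :
    pderiv j (aeval (fun i => (C (s i) + X i : MvPolynomial (Fin n) R)) q) =
      aeval (fun i => (C (s i) + X i : MvPolynomial (Fin n) R)) (pderiv j q) := by
  induction q using MvPolynomial.induction_on with
  | C a =>
    have h1 : (algebraMap ℝ (MvPolynomial (Fin n) R)) a = C (algebraMap ℝ R a) := by
      rw [IsScalarTower.algebraMap_apply ℝ R (MvPolynomial (Fin n) R),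
        MvPolynomial.algebraMap_eq]
    rw [aeval_C, h1, pderiv_C, pderiv_C, map_zero]
  | add p q hp hq => simp [hp, hq]
  | mul_X q i hq =>
    have h2 : (pderiv j) ((C (s i) + X i : MvPolynomial (Fin n) R)) =
        aeval (fun i => (C (s i) + X i : MvPolynomial (Fin n) R))
          ((pderiv j) (X i : MvPolynomial (Fin n) ℝ)) := by
      by_cases hij : j = i
      · subst hij
        rw [map_add, pderiv_C, zero_add, pderiv_X_self, pderiv_X_self, map_one]
      · rw [map_add, pderiv_C, zero_add, pderiv_X_of_ne (Ne.symm hij),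
          pderiv_X_of_ne (Ne.symm hij), map_zero]
    simp only [map_mul, map_add, pderiv_mul, hq, aeval_X, h2]

theorem constantCoeff_shift (s : Fin n → R) (q : MvPolynomial (Fin n) ℝ) :
    constantCoeff (aeval (fun i => (C (s i) + X i : MvPolynomial (Fin n) R)) q) =
      aeval s q := by
  induction q using MvPolynomial.induction_on with
  | C a =>
    have h1 : (algebraMap ℝ (MvPolynomial (Fin n) R)) a = C (algebraMap ℝ R a) := by
      rw [IsScalarTower.algebraMap_apply ℝ R (MvPolynomial (Fin n) R),
        MvPolynomial.algebraMap_eq]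
    rw [aeval_C, aeval_C, h1, constantCoeff_C]
  | add p q hp hq => simp [hp, hq]
  | mul_X q i hq => simp [hq]

end Aux2

section Aux3
variable {n : ℕ}

theorem foldr_id (x : MvPolynomial (Fin n) ℝ) (L : List (Fin n)) :
    L.foldr (fun _ q => q) x = x := by
  induction L with
  | nil => rfl
  | cons a L ih => simpa using ih

theorem mderiv_zero (q : MvPolynomial (Fin n) ℝ) : mderiv (fun _ => 0) q = q := by
  unfold mderiv
  simp only [Function.iterate_zero, id]
  exact foldr_id q _

theorem pderiv_iterate_comm (a b : Fin n) (k : ℕ) (P : MvPolynomial (Fin n) ℝ) :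
    pderiv a ((fun r => pderiv b r)^[k] P) = (fun r => pderiv b r)^[k] (pderiv a P) := by
  induction k generalizing P with
  | zero => rfl
  | succ k ih =>
    rw [Function.iterate_succ_apply', Function.iterate_succ_apply']
    rw [pderiv_comm' a b, ih]

theorem foldr_pderiv_comm (j : Fin n) (β : Fin n → ℕ) (P : MvPolynomial (Fin n) ℝ)
    (L : List (Fin n)) :
    L.foldr (fun i q => (fun r => pderiv i r)^[β i] q) (pderiv j P) =
      pderiv j (L.foldr (fun i q => (fun r => pderiv i r)^[β i] q) P) := by
  induction L with
  | nil => rfl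
  | cons a L ih => simp only [List.foldr_cons, ih, pderiv_iterate_comm]

theorem foldr_congr_mem {f g : Fin n → MvPolynomial (Fin n) ℝ → MvPolynomial (Fin n) ℝ}
    (L : List (Fin n)) (x : MvPolynomial (Fin n) ℝ)
    (h : ∀ i ∈ L, ∀ q, f i q = g i q) :
    L.foldr f x = L.foldr g x := by
  induction L with
  | nil => rfl
  | cons a L ih =>
    simp only [List.foldr_cons]
    rw [ih fun i hi q => h i (List.mem_cons_of_mem a hi) q, h a List.mem_cons_self]

theorem mderiv_add_single (j : Fin n) (β : Fin n → ℕ) (q : MvPolynomial (Fin n) ℝ) :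
    mderiv (fun i => β i + if i = j then 1 else 0) q = mderiv β (pderiv j q) := by
  unfold mderiv
  obtain ⟨L₁, L₂, hL⟩ := List.append_of_mem (List.mem_finRange j)
  have hnd := List.nodup_finRange n
  rw [hL] at hnd ⊢
  have hj1 : j ∉ L₁ := fun h => (List.disjoint_of_nodup_append hnd) h (List.mem_cons_self (a := j) (l := L₂))
  have hnd2 := (List.nodup_append'.mp hnd).2.1
  have hj2 : j ∉ L₂ := by
    intro h; exact (List.nodup_cons.mp hnd2).1 h
  rw [List.foldr_append, List.foldr_append, List.foldr_cons, List.foldr_cons]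
  have hcongr1 : ∀ i ∈ L₂, ∀ q : MvPolynomial (Fin n) ℝ,
      (fun r => pderiv i r)^[β i + if i = j then 1 else 0] q = (fun r => pderiv i r)^[β i] q := by
    intro i hi q
    rw [if_neg (fun h : i = j => hj2 (h ▸ hi)), add_zero]
  have hcongr2 : ∀ i ∈ L₁, ∀ q : MvPolynomial (Fin n) ℝ,
      (fun r => pderiv i r)^[β i + if i = j then 1 else 0] q = (fun r => pderiv i r)^[β i] q := by
    intro i hi q
    rw [if_neg (fun h : i = j => hj1 (h ▸ hi)), add_zero]
  rw [foldr_congr_mem L₂ q hcongr1]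
  rw [foldr_congr_mem L₁ _ hcongr2]
  congr 1
  beta_reduce
  rw [if_pos rfl, Function.iterate_add_apply]
  simp only [Function.iterate_one]
  rw [foldr_pderiv_comm]
end Aux3

section T
variable {n : ℕ} {R : Type*} [CommSemiring R] [Algebra ℝ R]

theorem taylor_coeff (s : Fin n → R) :
    ∀ (N : ℕ) (β : Fin n → ℕ), mdeg β = N → ∀ q : MvPolynomial (Fin n) ℝ,
    mfact β • coeff (Finsupp.equivFunOnFinite.symm β)
        (aeval (fun i => (C (s i) + X i : MvPolynomial (Fin n) R)) q) =
      aeval s (mderiv β q) := by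
  intro N
  induction N with
  | zero =>
    intro β hβ q
    have hβ0 : β = fun _ => 0 := by
      funext i
      have := Finset.sum_eq_zero_iff.mp hβ
      exact this i (Finset.mem_univ i)
    subst hβ0
    have h0 : (Finsupp.equivFunOnFinite.symm (fun _ => (0:ℕ)) : Fin n →₀ ℕ) = 0 := by
      ext a; rfl
    rw [h0, mderiv_zero]
    have h1 : mfact (fun _ => (0:ℕ) : Fin n → ℕ) = 1 := by simp [mfact]
    rw [h1, one_smul]
    rw [← constantCoeff_shift s q]
    rfl
  | succ N ih =>
    intro β hβ q
    have hex : ∃ j, β j ≠ 0 := by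
      by_contra hall
      push_neg at hall
      have : mdeg β = 0 := Finset.sum_eq_zero fun i _ => hall i
      omega
    obtain ⟨j, hj⟩ := hex
    set β' : Fin n → ℕ := Function.update β j (β j - 1) with hβ'
    have hβfun : β = fun i => β' i + if i = j then 1 else 0 := by
      funext i
      rcases eq_or_ne i j with rfl | hij
      · simp [hβ', Function.update_self]; omega
      · simp [hβ', Function.update_of_ne hij, hij]
    have hsum : mdeg β' = N := by
      have h1 : mdeg β = mdeg β' + 1 := by
        rw [hβfun]
        unfold mdeg
        rw [Finset.sum_add_distrib]
        congr 1
        simp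
      omega
    have key := ih β' hsum (pderiv j q)
    rw [← pderiv_shift, coeff_pderiv'_s17] at key
    have hfs : (Finsupp.equivFunOnFinite.symm β' + Finsupp.single j 1 : Fin n →₀ ℕ) =
        Finsupp.equivFunOnFinite.symm β := by
      ext a
      rw [Finsupp.add_apply]
      have h1 : (Finsupp.equivFunOnFinite.symm β' : Fin n →₀ ℕ) a = β' a := rfl
      have h2 : (Finsupp.equivFunOnFinite.symm β : Fin n →₀ ℕ) a = β a := rfl
      rw [h1, h2, Finsupp.single_apply]
      rcases eq_or_ne a j with rfl | haj
      · simp [hβ', Function.update_self]; omega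
      · have : ¬ j = a := fun h => haj h.symm
        simp [hβ', Function.update_of_ne haj, this]
    rw [hfs] at key
    have hB'j : (Finsupp.equivFunOnFinite.symm β' : Fin n →₀ ℕ) j = β j - 1 := by
      rw [(rfl : (Finsupp.equivFunOnFinite.symm β' : Fin n →₀ ℕ) j = β' j)]
      simp [hβ', Function.update_self]
    rw [hB'j] at key
    have hmf : mfact β = mfact β' * (β j - 1 + 1) := by
      have h1 : mfact β = (β j).factorial * ∏ i ∈ Finset.univ.erase j, (β i).factorial :=
        (Finset.mul_prod_erase Finset.univ _ (Finset.mem_univ j)).symm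
      have h2 : mfact β' = (β' j).factorial * ∏ i ∈ Finset.univ.erase j, (β' i).factorial :=
        (Finset.mul_prod_erase Finset.univ _ (Finset.mem_univ j)).symm
      have h3 : ∏ i ∈ Finset.univ.erase j, (β' i).factorial =
          ∏ i ∈ Finset.univ.erase j, (β i).factorial := by
        apply Finset.prod_congr rfl
        intro i hi
        rw [hβ', Function.update_of_ne (Finset.ne_of_mem_erase hi)]
      have h4 : β' j = β j - 1 := by simp [hβ', Function.update_self]
      rw [h1, h2, h3, h4]
      have h5 : (β j).factorial = (β j - 1 + 1) * (β j - 1).factorial := by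
        have : β j - 1 + 1 = β j := by omega
        rw [← this]
        exact Nat.factorial_succ _
      rw [h5]; ring
    rw [hmf, mul_smul, key]
    -- now RHS : aeval s (mderiv β q) = aeval s (mderiv β' (pderiv j q))
    rw [hβfun, mderiv_add_single]
end T

section Psi
variable {n : ℕ}

local notation "A" => MvPolynomial (Fin n) ℝ
local notation "B" => MvPolynomial (Fin n) (MvPolynomial (Fin n) ℝ)

noncomputable def psi (N : ℕ) (P : B) : A :=
  ∑ β ∈ Finset.Nat.antidiagonalTuple n N,
    coeff (Finsupp.equivFunOnFinite.symm β) P * monX β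

theorem degree_eq_sum_univ (d : Fin n →₀ ℕ) : d.degree = ∑ i, d i :=
  Finset.sum_subset (Finset.subset_univ _)
    (fun i _ hi => Finsupp.notMem_support_iff.mp hi)

theorem psi_homog_ne {N d : ℕ} {P : B} (h : P.IsHomogeneous d) (hd : d ≠ N) :
    psi N P = 0 := by
  apply Finset.sum_eq_zero
  intro β hβ
  have hdeg : (Finsupp.equivFunOnFinite.symm β : Fin n →₀ ℕ).degree = N := by
    rw [degree_eq_sum_univ]
    have : ∀ i, (Finsupp.equivFunOnFinite.symm β : Fin n →₀ ℕ) i = β i := fun i => rfl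
    simp only [this]
    exact Finset.Nat.mem_antidiagonalTuple.mp hβ
  rw [h.coeff_eq_zero (by rw [hdeg]; exact fun h' => hd h'.symm), zero_mul]

theorem psi_homog_eq {N : ℕ} {P : B} (h : P.IsHomogeneous N) :
    psi N P = aeval X P := by
  classical
  have hsub : P.support ⊆ (Finset.Nat.antidiagonalTuple n N).image
      (fun β : Fin n → ℕ => (Finsupp.equivFunOnFinite.symm β : Fin n →₀ ℕ)) := by
    intro d hd
    rw [Finset.mem_image]
    refine ⟨(d : Fin n → ℕ), ?_, Finsupp.equivFunOnFinite_symm_coe d⟩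
    rw [Finset.Nat.mem_antidiagonalTuple]
    by_contra hne
    have : d.degree ≠ N := by rw [degree_eq_sum_univ]; exact hne
    exact (mem_support_iff.mp hd) (h.coeff_eq_zero this)
  calc psi N P
      = ∑ d ∈ (Finset.Nat.antidiagonalTuple n N).image
          (fun β : Fin n → ℕ => (Finsupp.equivFunOnFinite.symm β : Fin n →₀ ℕ)),
          coeff d P * ∏ i, (X i : A) ^ d i :=
        (Finset.sum_image (s := Finset.Nat.antidiagonalTuple n N)
          (g := fun β : Fin n → ℕ => (Finsupp.equivFunOnFinite.symm β : Fin n →₀ ℕ))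
          (f := fun d : Fin n →₀ ℕ => coeff d P * ∏ i, (X i : A) ^ d i)
          (fun x _ y _ hxy => Finsupp.equivFunOnFinite.symm.injective hxy)).symm
    _ = ∑ d ∈ P.support, coeff d P * ∏ i, (X i : A) ^ d i :=
        (Finset.sum_subset hsub (fun d _ hd => by
          rw [notMem_support_iff.mp hd, zero_mul])).symm
    _ = aeval X P := by
        rw [aeval_def, eval₂_eq']
        apply Finset.sum_congr rfl
        intro d _
        rw [Algebra.algebraMap_self_apply]

theorem monX_add_single (j : Fin n) (β : Fin n → ℕ) :
    monX (fun i => β i + if i = j then 1 else 0) = monX β * X j := by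
  unfold monX
  beta_reduce
  simp only [pow_add]
  rw [Finset.prod_mul_distrib]
  congr 1
  have : ∀ i : Fin n, (X i : A) ^ (if i = j then 1 else 0) =
      if i = j then (X i : A) else 1 := by
    intro i; split <;> simp
  simp only [this]
  rw [Finset.prod_ite_eq' Finset.univ j (fun i => (X i : A))]
  simp
end Psi

section C5
variable {n : ℕ}

local notation "A" => MvPolynomial (Fin n) ℝ
local notation "B" => MvPolynomial (Fin n) (MvPolynomial (Fin n) ℝ)

theorem isHomog_pow {σ : Type*} {R : Type*} [CommSemiring R] {φ : MvPolynomial σ R}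
    {d : ℕ} (h : φ.IsHomogeneous d) (r : ℕ) : (φ ^ r).IsHomogeneous (r * d) := by
  induction r with
  | zero => simpa using isHomogeneous_one σ R
  | succ r ih =>
    rw [pow_succ, Nat.succ_mul]
    exact ih.mul h

theorem psi_sum {ι : Type*} (s : Finset ι) (f : ι → B) (N : ℕ) :
    psi N (∑ x ∈ s, f x) = ∑ x ∈ s, psi N (f x) := by
  unfold psi
  simp only [coeff_sum, Finset.sum_mul]
  exact Finset.sum_comm

theorem pderiv_QA (θ : Fin n → ℝ) (j : Fin n) :
    pderiv j (∑ i, C (θ i) * (X i : A) ^ 2) = C (2 * θ j) * X j := by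
  rw [map_sum]
  rw [Finset.sum_eq_single j]
  · rw [pderiv_C_mul, pderiv_pow, pderiv_X_self]
    rw [Nat.cast_ofNat, (map_ofNat C 2).symm]
    simp only [C_mul]
    ring
  · intro b _ hbj
    rw [pderiv_C_mul, pderiv_pow, pderiv_X_of_ne hbj]
    ring
  · intro h; exact absurd (Finset.mem_univ j) h

theorem pderiv_p (θ : Fin n → ℝ) (k : ℕ) (hk : 1 ≤ k) (c : ℝ) (j : Fin n) :
    pderiv j (C c * (∑ i, C (θ i) * (X i : A) ^ 2) ^ k) =
      C (2 * k * c * θ j) * (X j * (∑ i, C (θ i) * (X i : A) ^ 2) ^ (k - 1)) := by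
  rw [pderiv_C_mul, pderiv_pow, pderiv_QA]
  rw [(by rw [map_natCast] : ((k : ℕ) : A) = C ((k : ℕ) : ℝ))]
  simp only [C_mul]
  ring

theorem C_sq_one {r : ℝ} (h : r ^ 2 = 1) : (C r : A) ^ 2 = 1 := by
  rw [← map_pow, h, map_one]

theorem aeval_s_QA (θ : Fin n → ℝ) (hθ : ∀ i, θ i ^ 2 = 1) :
    aeval (fun i => (C (θ i) * X i : A)) (∑ i, C (θ i) * (X i : A) ^ 2) =
      ∑ i, C (θ i) * (X i : A) ^ 2 := by
  rw [map_sum]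
  apply Finset.sum_congr rfl
  intro i _
  rw [map_mul, map_pow, aeval_X, aeval_C, MvPolynomial.algebraMap_eq]
  have h1 : (C (θ i) : A) ^ 2 = 1 := C_sq_one (hθ i)
  linear_combination (C (θ i) * (X i : A) ^ 2) * h1

theorem algebraMap_RB (a : ℝ) :
    (algebraMap ℝ B) a = C (C a : A) := by
  rw [IsScalarTower.algebraMap_apply ℝ A B, MvPolynomial.algebraMap_eq,
    MvPolynomial.algebraMap_eq]

theorem aeval_shift_QA (θ : Fin n → ℝ) (hθ : ∀ i, θ i ^ 2 = 1) :
    aeval (fun i => (C (C (θ i) * X i : A) + X i : B)) (∑ i, C (θ i) * (X i : A) ^ 2) =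
      (C (∑ i, C (θ i) * (X i : A) ^ 2) : B) + (∑ i, (C (2 * X i : A) : B) * X i)
        + (∑ i, (C (C (θ i) : A) : B) * X i ^ 2) := by
  rw [map_sum]
  rw [show (C (∑ i, C (θ i) * (X i : A) ^ 2) : B) = ∑ i, (C (C (θ i) * X i ^ 2 : A) : B)
    from map_sum C _ _]
  rw [← Finset.sum_add_distrib, ← Finset.sum_add_distrib]
  apply Finset.sum_congr rfl
  intro i _
  rw [map_mul, map_pow, aeval_X, aeval_C, algebraMap_RB]
  have h1 : (C (C (θ i) : A) : B) ^ 2 = 1 := by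
    rw [← map_pow, ← map_pow, hθ i, map_one, map_one]
  have h2 : (C (C (θ i) * X i : A) : B) = C (C (θ i) : A) * C (X i : A) := by rw [map_mul]
  have h3 : (C (2 * X i : A) : B) = 2 * C (X i : A) := by rw [map_mul, map_ofNat]
  have h4 : (C (C (θ i) * X i ^ 2 : A) : B) = C (C (θ i) : A) * C (X i : A) ^ 2 := by
    rw [map_mul, map_pow]
  rw [h2, h3, h4]
  linear_combination (C (C (θ i) : A) * C (X i : A) ^ 2
    + 2 * C (X i : A) * (X i : B)) * h1

theorem LB_homog (θ : Fin n → ℝ) :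
    (∑ i, (C (2 * X i : A) : B) * X i).IsHomogeneous 1 :=
  IsHomogeneous.sum _ _ _ fun i _ => by
    have h := (isHomogeneous_C (Fin n) (2 * X i : A)).mul (isHomogeneous_X A i)
    rwa [zero_add] at h

theorem Q2B_homog (θ : Fin n → ℝ) :
    (∑ i, (C (C (θ i) : A) : B) * X i ^ 2).IsHomogeneous 2 :=
  IsHomogeneous.sum _ _ _ fun i _ => by
    have h := (isHomogeneous_C (Fin n) (C (θ i) : A)).mul (isHomog_pow (isHomogeneous_X A i) 2)
    norm_num at h
    exact h

theorem aevalA_LB (θ : Fin n → ℝ) :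
    aeval X (∑ i, (C (2 * X i : A) : B) * X i) = 2 * ∑ i, (X i : A) ^ 2 := by
  rw [map_sum, Finset.mul_sum]
  apply Finset.sum_congr rfl
  intro i _
  rw [map_mul, aeval_X, aeval_C, Algebra.algebraMap_self_apply]
  ring

theorem aevalA_Q2B (θ : Fin n → ℝ) :
    aeval X (∑ i, (C (C (θ i) : A) : B) * X i ^ 2) = ∑ i, C (θ i) * (X i : A) ^ 2 := by
  rw [map_sum]
  apply Finset.sum_congr rfl
  intro i _
  rw [map_mul, map_pow, aeval_X, aeval_C, Algebra.algebraMap_self_apply]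

theorem psi_add (N : ℕ) (P Q : B) : psi N (P + Q) = psi N P + psi N Q := by
  unfold psi
  simp [coeff_add, add_mul, Finset.sum_add_distrib]

theorem isHomog_natCast (m : ℕ) : ((m : B)).IsHomogeneous 0 := by
  rw [← map_natCast (C : MvPolynomial (Fin n) ℝ →+* B) m]
  exact isHomogeneous_C _ _

theorem psi_main (θ : Fin n → ℝ) (hθ : ∀ i, θ i ^ 2 = 1) (k : ℕ) (hk : 1 ≤ k) (j : Fin n) :
    psi (2 * k - 2)
      ((C (C (θ j) * X j : A) + X j : B) *
        ((C (∑ i, C (θ i) * (X i : A) ^ 2) : B)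
          + (∑ i, (C (2 * X i : A) : B) * X i)
          + (∑ i, (C (C (θ i) : A) : B) * X i ^ 2)) ^ (k - 1)) =
      (C (θ j) * X j : A) * (∑ i, C (θ i) * (X i : A) ^ 2) ^ (k - 1)
        + ((k - 1 : ℕ) : A) * ((2 * ∑ i, (X i : A) ^ 2) *
            (X j * (∑ i, C (θ i) * (X i : A) ^ 2) ^ (k - 2))) := by
  set q : A := ∑ i, C (θ i) * X i ^ 2 with hq
  set L : B := ∑ i, (C (2 * X i : A) : B) * X i with hL
  set P2 : B := ∑ i, (C (C (θ i) : A) : B) * X i ^ 2 with hP2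
  set sj : A := C (θ j) * X j with hsj
  have hLh : L.IsHomogeneous 1 := LB_homog θ
  have hP2h : P2.IsHomogeneous 2 := Q2B_homog θ
  have hexp : ((C q : B) + L + P2) ^ (k - 1) =
      ∑ i ∈ Finset.range k, ∑ r ∈ Finset.range (k - i),
        (C q : B) ^ i * (L ^ r * P2 ^ (k - 1 - i - r) * (((k - 1 - i).choose r : ℕ) : B))
          * (((k - 1).choose i : ℕ) : B) := by
    rw [add_assoc, add_pow, show k - 1 + 1 = k by omega]
    apply Finset.sum_congr rfl
    intro i hi
    have hik : i < k := Finset.mem_range.mp hi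
    rw [add_pow, show k - 1 - i + 1 = k - i by omega]
    rw [Finset.mul_sum, Finset.sum_mul]
  have hsplit : psi (2 * k - 2) ((C sj + X j : B) * ((C q : B) + L + P2) ^ (k - 1)) =
      ∑ i ∈ Finset.range k, ∑ r ∈ Finset.range (k - i),
        psi (2 * k - 2) ((C sj + X j : B) *
          ((C q : B) ^ i * (L ^ r * P2 ^ (k - 1 - i - r) * (((k - 1 - i).choose r : ℕ) : B))
            * (((k - 1).choose i : ℕ) : B))) := by
    rw [hexp, Finset.mul_sum, psi_sum]
    refine Finset.sum_congr rfl fun i _ => ?_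
    rw [Finset.mul_sum, psi_sum]
  rw [hsplit]
  -- homogeneity of the generic pieces
  have hhomT : ∀ i r : ℕ,
      ((C q : B) ^ i * (L ^ r * P2 ^ (k - 1 - i - r) * (((k - 1 - i).choose r : ℕ) : B))
        * (((k - 1).choose i : ℕ) : B)).IsHomogeneous
        (i * 0 + (r * 1 + (k - 1 - i - r) * 2 + 0) + 0) :=
    fun i r =>
      (((isHomog_pow (isHomogeneous_C _ q) i).mul
        (((isHomog_pow hLh r).mul (isHomog_pow hP2h (k - 1 - i - r))).mul
          (isHomog_natCast _))).mul (isHomog_natCast _))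
  have hhomU : ∀ i r : ℕ,
      ((C sj : B) * ((C q : B) ^ i * (L ^ r * P2 ^ (k - 1 - i - r)
          * (((k - 1 - i).choose r : ℕ) : B)) * (((k - 1).choose i : ℕ) : B))).IsHomogeneous
        (0 + (i * 0 + (r * 1 + (k - 1 - i - r) * 2 + 0) + 0)) :=
    fun i r => (isHomogeneous_C _ sj).mul (hhomT i r)
  have hhomV : ∀ i r : ℕ,
      ((X j : B) * ((C q : B) ^ i * (L ^ r * P2 ^ (k - 1 - i - r)
          * (((k - 1 - i).choose r : ℕ) : B)) * (((k - 1).choose i : ℕ) : B))).IsHomogeneous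
        (1 + (i * 0 + (r * 1 + (k - 1 - i - r) * 2 + 0) + 0)) :=
    fun i r => (isHomogeneous_X _ j).mul (hhomT i r)
  -- evaluate inner sums
  have hinner : ∀ i ∈ Finset.range k,
      (∑ r ∈ Finset.range (k - i),
        psi (2 * k - 2) ((C sj + X j : B) *
          ((C q : B) ^ i * (L ^ r * P2 ^ (k - 1 - i - r) * (((k - 1 - i).choose r : ℕ) : B))
            * (((k - 1).choose i : ℕ) : B)))) =
      if i = 0 then sj * q ^ (k - 1)
          + ((k - 1 : ℕ) : A) * ((2 * ∑ i, (X i : A) ^ 2) * (X j * q ^ (k - 2)))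
        else 0 := by
    intro i hi
    have hik : i < k := Finset.mem_range.mp hi
    rcases Nat.eq_zero_or_pos i with rfl | hipos
    · rw [if_pos rfl]
      have hterm : ∀ r ∈ Finset.range (k - 0),
          psi (2 * k - 2) ((C sj + X j : B) *
            ((C q : B) ^ 0 * (L ^ r * P2 ^ (k - 1 - 0 - r) * (((k - 1 - 0).choose r : ℕ) : B))
              * (((k - 1).choose 0 : ℕ) : B))) =
          (if r = 0 then sj * q ^ (k - 1) else 0) +
          (if r = 1 then ((k - 1 : ℕ) : A) * ((2 * ∑ i, (X i : A) ^ 2) * (X j * q ^ (k - 2)))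
            else 0) := by
        intro r hr
        have hrk : r < k := by simpa using hr
        rw [add_mul, psi_add]
        refine congrArg₂ (· + ·) ?_ ?_
        · -- C sj part
          rcases Nat.eq_zero_or_pos r with rfl | hrpos
          · rw [if_pos rfl]
            have h00 : (0 + ((0:ℕ) * 0 + (0 * 1 + (k - 1 - 0 - 0) * 2 + 0) + 0)) = 2 * k - 2 := by
              omega
            rw [psi_homog_eq (h00 ▸ hhomU 0 0)]
            simp only [map_mul, map_pow, aevalA_LB θ, aevalA_Q2B θ, aeval_C,
              Algebra.algebraMap_self_apply, map_natCast, Nat.choose_zero_right, Nat.cast_one,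
              pow_zero, one_mul, mul_one, Nat.choose_self]
            rw [show aeval X P2 = q from aevalA_Q2B θ]
            rw [show k - 1 - 0 - 0 = k - 1 by omega]
          · rw [if_neg (by omega)]
            refine psi_homog_ne (hhomU 0 r) ?_
            omega
        · -- X j part
          rcases eq_or_ne r 1 with rfl | hrne
          · rw [if_pos rfl]
            have h01 : (1 + ((0:ℕ) * 0 + (1 * 1 + (k - 1 - 0 - 1) * 2 + 0) + 0)) = 2 * k - 2 := by
              omega
            rw [psi_homog_eq (h01 ▸ hhomV 0 1)]
            simp only [map_mul, map_pow, aevalA_LB θ, aevalA_Q2B θ, aeval_C, aeval_X,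
              Algebra.algebraMap_self_apply, map_natCast, Nat.choose_zero_right, Nat.cast_one,
              pow_zero, pow_one, one_mul, mul_one, Nat.choose_one_right]
            rw [show aeval X L = 2 * ∑ i, (X i : A) ^ 2 from aevalA_LB θ, show aeval X P2 = q from aevalA_Q2B θ]
            rw [show k - 1 - 0 - 1 = k - 2 by omega, show k - 1 - 0 = k - 1 by omega]
            ring
          · rw [if_neg hrne]
            refine psi_homog_ne (hhomV 0 r) ?_
            omega
      rw [Finset.sum_congr rfl hterm, Finset.sum_add_distrib,
        Finset.sum_ite_eq' (Finset.range (k - 0)) 0,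
        Finset.sum_ite_eq' (Finset.range (k - 0)) 1]
      rw [if_pos (by simp; omega : (0:ℕ) ∈ Finset.range (k - 0))]
      by_cases hk2 : 2 ≤ k
      · rw [if_pos (by simp; omega : (1:ℕ) ∈ Finset.range (k - 0))]
      · have hk1 : k = 1 := by omega
        subst hk1
        norm_num
    · rw [if_neg (by omega)]
      apply Finset.sum_eq_zero
      intro r hr
      have hrk : r < k - i := Finset.mem_range.mp hr
      rw [add_mul, psi_add]
      rw [psi_homog_ne (hhomU i r) (by omega), psi_homog_ne (hhomV i r) (by omega), add_zero]
  rw [Finset.sum_congr rfl hinner, Finset.sum_ite_eq' (Finset.range k) 0]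
  rw [if_pos (by simp; omega : (0:ℕ) ∈ Finset.range k)]

theorem psi_C_mul (N : ℕ) (a : A) (P : B) : psi N ((C a : B) * P) = a * psi N P := by
  unfold psi
  rw [Finset.mul_sum]
  apply Finset.sum_congr rfl
  intro β _
  rw [coeff_C_mul, mul_assoc]
end C5

/-- If `j = 2k` is even and `p_j = c·Q^k` is `Q`-type (`c ≠ 0`,
`Q(u) = Σᵢθᵢuᵢ²`), then for any order-1 multi-index `γ^m(1)` (coordinate
`m ≠ l`), `|u|²Ξ_{j,γ^m(1)}(ũ) = −θ_lθ_m·B_{j,γ^m(1)}(ũ)`, where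
`|u|²Ξ_{j,γ^m(1)}(ũ) = Σ_{|β|=j−2}(1/β!)[θ_m(∂_{β+e_l}p_j)(ũ)u^{β+e_m} −
θ_l(∂_{β+e_m}p_j)(ũ)u^{β+e_l}]` and
`B_{j,γ^m(1)}(ũ) = (∂_{e_l}p_j)(ũ)ũ^{e_m} − (∂_{e_m}p_j)(ũ)ũ^{e_l}`. -/
theorem stmt_17 {n : ℕ} (hn : 2 ≤ n) (θ : Fin n → ℝ) (hθ : ∀ i, θ i = 1 ∨ θ i = -1)
    (l m : Fin n) (hlm : m ≠ l) (k : ℕ) (hk : 1 ≤ k) (c : ℝ) (hc : c ≠ 0)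
    (p : MvPolynomial (Fin n) ℝ)
    (hp : p = C c * (∑ i, C (θ i) * (X i : MvPolynomial (Fin n) ℝ) ^ 2) ^ k)
    (Xi Bt : MvPolynomial (Fin n) ℝ)
    (hXi : Xi = ∑ β ∈ Finset.Nat.antidiagonalTuple n (2 * k - 2),
      (C ((mfact β : ℝ))⁻¹ : MvPolynomial (Fin n) ℝ) *
        (C (θ m) * MvPolynomial.aeval (fun i => (C (θ i) * X i : MvPolynomial (Fin n) ℝ))
              (mderiv (fun i => β i + if i = l then 1 else 0) p) *
            monX (fun i => β i + if i = m then 1 else 0)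
         - C (θ l) * MvPolynomial.aeval (fun i => (C (θ i) * X i : MvPolynomial (Fin n) ℝ))
              (mderiv (fun i => β i + if i = m then 1 else 0) p) *
            monX (fun i => β i + if i = l then 1 else 0)))
    (hBt : Bt =
        MvPolynomial.aeval (fun i => (C (θ i) * X i : MvPolynomial (Fin n) ℝ))
            (MvPolynomial.pderiv l p) * (C (θ m) * X m)
        - MvPolynomial.aeval (fun i => (C (θ i) * X i : MvPolynomial (Fin n) ℝ))
            (MvPolynomial.pderiv m p) * (C (θ l) * X l)) :
    Xi = C (-(θ l * θ m)) * Bt := by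
  have hθ2 : ∀ i, θ i ^ 2 = 1 := fun i => by rcases hθ i with h | h <;> rw [h] <;> norm_num
  have hgl : pderiv l p = C (2 * k * c * θ l) *
      (X l * (∑ i, C (θ i) * (X i : MvPolynomial (Fin n) ℝ) ^ 2) ^ (k - 1)) := by
    rw [hp]; exact pderiv_p θ k hk c l
  have hgm : pderiv m p = C (2 * k * c * θ m) *
      (X m * (∑ i, C (θ i) * (X i : MvPolynomial (Fin n) ℝ) ^ 2) ^ (k - 1)) := by
    rw [hp]; exact pderiv_p θ k hk c m
  -- step 1 : rewrite Xi through psi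
  have hXi2 : Xi = C (θ m) * X m * psi (2 * k - 2)
        (aeval (fun i => (C (C (θ i) * X i : MvPolynomial (Fin n) ℝ) + X i :
          MvPolynomial (Fin n) (MvPolynomial (Fin n) ℝ))) (pderiv l p))
      - C (θ l) * X l * psi (2 * k - 2)
        (aeval (fun i => (C (C (θ i) * X i : MvPolynomial (Fin n) ℝ) + X i :
          MvPolynomial (Fin n) (MvPolynomial (Fin n) ℝ))) (pderiv m p)) := by
    rw [hXi]
    unfold psi
    rw [Finset.mul_sum, Finset.mul_sum, ← Finset.sum_sub_distrib]
    apply Finset.sum_congr rfl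
    intro β hβ
    have hmdeg : mdeg β = 2 * k - 2 := Finset.Nat.mem_antidiagonalTuple.mp hβ
    have hTl := taylor_coeff (fun i => (C (θ i) * X i : MvPolynomial (Fin n) ℝ))
      (2 * k - 2) β hmdeg (pderiv l p)
    have hTm := taylor_coeff (fun i => (C (θ i) * X i : MvPolynomial (Fin n) ℝ))
      (2 * k - 2) β hmdeg (pderiv m p)
    rw [mderiv_add_single l β p, mderiv_add_single m β p, ← hTl, ← hTm,
      monX_add_single m β, monX_add_single l β]
    have hmf0 : ((mfact β : ℕ) : ℝ) ≠ 0 := by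
      have : 0 < mfact β := Finset.prod_pos fun i _ => Nat.factorial_pos _
      positivity
    have hsm : ∀ x : MvPolynomial (Fin n) ℝ,
        mfact β • x = C ((mfact β : ℕ) : ℝ) * x := fun x => by
      rw [nsmul_eq_mul, map_natCast]
    rw [hsm, hsm]
    have hC1 : (C ((mfact β : ℝ))⁻¹ : MvPolynomial (Fin n) ℝ) * C ((mfact β : ℕ) : ℝ) = 1 := by
      rw [← C_mul, inv_mul_cancel₀ hmf0, map_one]
    linear_combination (C (θ m) *
        coeff (Finsupp.equivFunOnFinite.symm β)
          (aeval (fun i => (C (C (θ i) * X i : MvPolynomial (Fin n) ℝ) + X i :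
            MvPolynomial (Fin n) (MvPolynomial (Fin n) ℝ))) (pderiv l p)) *
        (monX β * X m)
      - C (θ l) *
        coeff (Finsupp.equivFunOnFinite.symm β)
          (aeval (fun i => (C (C (θ i) * X i : MvPolynomial (Fin n) ℝ) + X i :
            MvPolynomial (Fin n) (MvPolynomial (Fin n) ℝ))) (pderiv m p)) *
        (monX β * X l)) * hC1
  -- step 2 : psi values
  have hval : ∀ j : Fin n, psi (2 * k - 2)
      (aeval (fun i => (C (C (θ i) * X i : MvPolynomial (Fin n) ℝ) + X i :
        MvPolynomial (Fin n) (MvPolynomial (Fin n) ℝ))) (pderiv j p)) =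
      C (2 * k * c * θ j) *
        ((C (θ j) * X j) * (∑ i, C (θ i) * (X i : MvPolynomial (Fin n) ℝ) ^ 2) ^ (k - 1)
          + ((k - 1 : ℕ) : MvPolynomial (Fin n) ℝ) *
            ((2 * ∑ i, (X i : MvPolynomial (Fin n) ℝ) ^ 2) *
              (X j * (∑ i, C (θ i) * (X i : MvPolynomial (Fin n) ℝ) ^ 2) ^ (k - 2)))) := by
    intro j
    have hmm : ∀ u v : MvPolynomial (Fin n) ℝ,
        aeval (fun i => (C (C (θ i) * X i : MvPolynomial (Fin n) ℝ) + X i :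
          MvPolynomial (Fin n) (MvPolynomial (Fin n) ℝ))) (u * v) =
        aeval (fun i => (C (C (θ i) * X i : MvPolynomial (Fin n) ℝ) + X i :
          MvPolynomial (Fin n) (MvPolynomial (Fin n) ℝ))) u *
        aeval (fun i => (C (C (θ i) * X i : MvPolynomial (Fin n) ℝ) + X i :
          MvPolynomial (Fin n) (MvPolynomial (Fin n) ℝ))) v := fun u v => map_mul _ u v
    have hpw : ∀ (u : MvPolynomial (Fin n) ℝ) (e : ℕ),
        aeval (fun i => (C (C (θ i) * X i : MvPolynomial (Fin n) ℝ) + X i :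
          MvPolynomial (Fin n) (MvPolynomial (Fin n) ℝ))) (u ^ e) =
        aeval (fun i => (C (C (θ i) * X i : MvPolynomial (Fin n) ℝ) + X i :
          MvPolynomial (Fin n) (MvPolynomial (Fin n) ℝ))) u ^ e := fun u e => map_pow _ u e
    rw [hp, pderiv_p θ k hk c j, hmm, hmm, hpw, aeval_X, aeval_C,
      algebraMap_RB, aeval_shift_QA θ hθ2, psi_C_mul, psi_main θ hθ2 k hk j]
  -- step 3 : Bt values
  have hbl : aeval (fun i => (C (θ i) * X i : MvPolynomial (Fin n) ℝ)) (pderiv l p) =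
      C (2 * k * c * θ l) * (C (θ l) * X l *
        (∑ i, C (θ i) * (X i : MvPolynomial (Fin n) ℝ) ^ 2) ^ (k - 1)) := by
    have hmm : ∀ u v : MvPolynomial (Fin n) ℝ,
        aeval (fun i => (C (θ i) * X i : MvPolynomial (Fin n) ℝ)) (u * v) =
        aeval (fun i => (C (θ i) * X i : MvPolynomial (Fin n) ℝ)) u *
        aeval (fun i => (C (θ i) * X i : MvPolynomial (Fin n) ℝ)) v := fun u v => map_mul _ u v
    have hpw : ∀ (u : MvPolynomial (Fin n) ℝ) (e : ℕ),
        aeval (fun i => (C (θ i) * X i : MvPolynomial (Fin n) ℝ)) (u ^ e) =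
        aeval (fun i => (C (θ i) * X i : MvPolynomial (Fin n) ℝ)) u ^ e :=
      fun u e => map_pow _ u e
    rw [hgl, hmm, hmm, hpw, aeval_X, aeval_s_QA θ hθ2, aeval_C,
      MvPolynomial.algebraMap_eq]
  have hbm : aeval (fun i => (C (θ i) * X i : MvPolynomial (Fin n) ℝ)) (pderiv m p) =
      C (2 * k * c * θ m) * (C (θ m) * X m *
        (∑ i, C (θ i) * (X i : MvPolynomial (Fin n) ℝ) ^ 2) ^ (k - 1)) := by
    have hmm : ∀ u v : MvPolynomial (Fin n) ℝ,
        aeval (fun i => (C (θ i) * X i : MvPolynomial (Fin n) ℝ)) (u * v) =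
        aeval (fun i => (C (θ i) * X i : MvPolynomial (Fin n) ℝ)) u *
        aeval (fun i => (C (θ i) * X i : MvPolynomial (Fin n) ℝ)) v := fun u v => map_mul _ u v
    have hpw : ∀ (u : MvPolynomial (Fin n) ℝ) (e : ℕ),
        aeval (fun i => (C (θ i) * X i : MvPolynomial (Fin n) ℝ)) (u ^ e) =
        aeval (fun i => (C (θ i) * X i : MvPolynomial (Fin n) ℝ)) u ^ e :=
      fun u e => map_pow _ u e
    rw [hgm, hmm, hmm, hpw, aeval_X, aeval_s_QA θ hθ2, aeval_C,
      MvPolynomial.algebraMap_eq]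
  -- final algebra
  rw [hXi2, hval l, hval m, hBt, hbl, hbm]
  have hCl : (C (θ l) : MvPolynomial (Fin n) ℝ) ^ 2 = 1 := C_sq_one (hθ2 l)
  have hCm : (C (θ m) : MvPolynomial (Fin n) ℝ) ^ 2 = 1 := C_sq_one (hθ2 m)
  simp only [C_mul, map_neg]
  linear_combination (C (2:ℝ) * C ((k:ℕ):ℝ) * C c * X l * X m *
      (∑ i, C (θ i) * (X i : MvPolynomial (Fin n) ℝ) ^ 2) ^ (k - 1) *
      C (θ l) * C (θ m) ^ 2) * hCl
    - (C (2:ℝ) * C ((k:ℕ):ℝ) * C c * X l * X m *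
      (∑ i, C (θ i) * (X i : MvPolynomial (Fin n) ℝ) ^ 2) ^ (k - 1) *
      C (θ l) ^ 2 * C (θ m)) * hCm
end
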